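/- arXiv:2303.10786 — 2 statements merged into one kernel-verified Lean document; each statement's English description precedes it below -/
import Mathlib

section
/- The SL(2,ℂ)-orbit of the Lagrangian span{X³, X²Y} is exactly the set of Lagrangians W of V for which there exists [a:b] ∈ ℂℙ¹ such that (bX−aY)² divides every element of W (equivalently, all elements of W share a common double root). -/
noncomputable section

open MvPolynomial

/-- The polynomial ring `ℂ[X,Y]`. -/
abbrev P2 : Type := MvPolynomial (Fin 2) ℂ

/-- The variable `X`. -/
def Xv : P2 := X 0

/-- The variable `Y`. -/
def Yv : P2 := X 1

/-- `V`: the space of homogeneous cubic polynomials in `X, Y`. -/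
def Vcubic : Submodule ℂ P2 := homogeneousSubmodule (Fin 2) ℂ 3

/-- The coefficient of `X^i Y^j`. -/
def cf (i j : ℕ) (p : P2) : ℂ := coeff (Finsupp.single 0 i + Finsupp.single 1 j) p

/-- The alternating bilinear form `ω` with `ω(X³,Y³) = 1`, `ω(X²Y,XY²) = -1/3`,
all other pairings of distinct basis vectors being `0`. -/
def omegaForm (p q : P2) : ℂ :=
  cf 3 0 p * cf 0 3 q - cf 0 3 p * cf 3 0 q
    - (1 / 3) * (cf 2 1 p * cf 1 2 q - cf 1 2 p * cf 2 1 q)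

/-- The linear form `b X - a Y` associated to the point `[a : b] ∈ ℂℙ¹`. -/
def lf (a b : ℂ) : P2 := C b * Xv - C a * Yv

/-- A Lagrangian of `V`: a 2-dimensional subspace contained in `V` on which `ω` vanishes. -/
def IsLagrangian (W : Submodule ℂ P2) : Prop :=
  W ≤ Vcubic ∧ Module.finrank ℂ W = 2 ∧ ∀ p ∈ W, ∀ q ∈ W, omegaForm p q = 0

/-- A perfect cube: a nonzero element of the form `c • (bX - aY)³`. -/
def IsPerfectCube (p : P2) : Prop :=
  ∃ c a b : ℂ, c ≠ 0 ∧ (a ≠ 0 ∨ b ≠ 0) ∧ p = C c * lf a b ^ 3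

/-- The action of `SL(2,ℂ)` on `ℂ[X,Y]` by linear substitution of the variables. -/
def subst (g : Matrix.SpecialLinearGroup (Fin 2) ℂ) : P2 →ₐ[ℂ] P2 :=
  aeval (fun i => C (g.1 i 0) * Xv + C (g.1 i 1) * Yv)

/-- The induced action of `SL(2,ℂ)` on subspaces of `ℂ[X,Y]`. -/
def mapAct (g : Matrix.SpecialLinearGroup (Fin 2) ℂ) (W : Submodule ℂ P2) :
    Submodule ℂ P2 :=
  W.map (subst g).toLinearMap

/-- The `SL(2,ℂ)`-orbit of a subspace. -/
def slOrbit (W₀ : Submodule ℂ P2) : Set (Submodule ℂ P2) := {W | ∃ g, W = mapAct g W₀}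

/-- The Lagrangian `span{X³, X²Y}`. -/
def L₁ : Submodule ℂ P2 := Submodule.span ℂ {Xv ^ 3, Xv ^ 2 * Yv}

/-- The Lagrangian `span{X³, XY²}`. -/
def L₂ : Submodule ℂ P2 := Submodule.span ℂ {Xv ^ 3, Xv * Yv ^ 2}

/-- The Lagrangian `span{X²Y, X³ + Y³}`. -/
def L₃ : Submodule ℂ P2 := Submodule.span ℂ {Xv ^ 2 * Yv, Xv ^ 3 + Yv ^ 3}


/-! ### Auxiliary lemmas -/

section Aux

lemma single_add_single_eq (k l i j : ℕ) :
    (Finsupp.single (0:Fin 2) k + Finsupp.single 1 l = Finsupp.single 0 i + Finsupp.single 1 j)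
      ↔ (k = i ∧ l = j) := by
  constructor
  · intro h
    constructor
    · have := congrArg (fun f => f 0) h
      simpa using this
    · have := congrArg (fun f => f 1) h
      simpa using this
  · rintro ⟨rfl, rfl⟩; rfl

lemma cf_term (c : ℂ) (i j k l : ℕ) :
    cf i j (C c * Xv ^ k * Yv ^ l) = if k = i ∧ l = j then c else 0 := by
  rw [cf, Xv, Yv, X_pow_eq_monomial, X_pow_eq_monomial, mul_assoc, monomial_mul, one_mul,
    C_mul_monomial, mul_one, coeff_monomial]
  simp [single_add_single_eq]

lemma cf_add (i j : ℕ) (p q : P2) : cf i j (p + q) = cf i j p + cf i j q := coeff_add _ _ _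
lemma cf_smul (i j : ℕ) (s : ℂ) (p : P2) : cf i j (s • p) = s * cf i j p := coeff_smul _ _ _

/-- A normal form for cubics. -/
def Eterm (c3 c2 c1 c0 : ℂ) : P2 :=
  C c3 * Xv^3 * Yv^0 + C c2 * Xv^2 * Yv^1 + C c1 * Xv^1 * Yv^2 + C c0 * Xv^0 * Yv^3

lemma cf_E30 (c3 c2 c1 c0 : ℂ) : cf 3 0 (Eterm c3 c2 c1 c0) = c3 := by
  simp only [Eterm, cf_add, cf_term]; norm_num
lemma cf_E21 (c3 c2 c1 c0 : ℂ) : cf 2 1 (Eterm c3 c2 c1 c0) = c2 := by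
  simp only [Eterm, cf_add, cf_term]; norm_num
lemma cf_E12 (c3 c2 c1 c0 : ℂ) : cf 1 2 (Eterm c3 c2 c1 c0) = c1 := by
  simp only [Eterm, cf_add, cf_term]; norm_num
lemma cf_E03 (c3 c2 c1 c0 : ℂ) : cf 0 3 (Eterm c3 c2 c1 c0) = c0 := by
  simp only [Eterm, cf_add, cf_term]; norm_num

lemma expand_cube (a b : ℂ) :
    (C b * Xv + C a * Yv)^3 = Eterm (b*b*b) (3*(b*b*a)) (3*(b*a*a)) (a*a*a) := by
  simp only [Eterm, map_mul, map_ofNat]; ring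

lemma expand_sqmul (a b c d : ℂ) :
    (C b * Xv + C a * Yv)^2 * (C c * Xv + C d * Yv) =
      Eterm (b*b*c) (b*b*d + 2*(b*a*c)) (a*a*c + 2*(b*a*d)) (a*a*d) := by
  simp only [Eterm, map_mul, map_add, map_ofNat]; ring

lemma omega_cube (a b c d : ℂ) :
    omegaForm ((C b * Xv + C a * Yv)^3) ((C b * Xv + C a * Yv)^2 * (C c * Xv + C d * Yv)) = 0 := by
  rw [omegaForm, expand_cube, expand_sqmul, cf_E30, cf_E21, cf_E12, cf_E03,
    cf_E30, cf_E21, cf_E12, cf_E03]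
  ring

lemma omega_comb (u v : P2) (s t s' t' : ℂ) :
    omegaForm (s • u + t • v) (s' • u + t' • v) = (s * t' - t * s') * omegaForm u v := by
  simp only [omegaForm, cf_add, cf_smul]; ring

lemma cf_lin10 (a b : ℂ) : cf 1 0 (C b * Xv + C a * Yv) = b := by
  have h : C b * Xv + C a * Yv = C b * Xv^1 * Yv^0 + C a * Xv^0 * Yv^1 := by ring
  rw [h, cf_add, cf_term, cf_term]; norm_num
lemma cf_lin01 (a b : ℂ) : cf 0 1 (C b * Xv + C a * Yv) = a := by
  have h : C b * Xv + C a * Yv = C b * Xv^1 * Yv^0 + C a * Xv^0 * Yv^1 := by ring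
  rw [h, cf_add, cf_term, cf_term]; norm_num

lemma lin_ne_zero {a b : ℂ} (h : a ≠ 0 ∨ b ≠ 0) : C b * Xv + C a * Yv ≠ 0 := by
  intro h0
  have h1 : cf 1 0 (C b * Xv + C a * Yv) = 0 := by rw [h0]; simp [cf]
  have h2 : cf 0 1 (C b * Xv + C a * Yv) = 0 := by rw [h0]; simp [cf]
  rw [cf_lin10] at h1; rw [cf_lin01] at h2
  rcases h with h | h <;> [exact h h2; exact h h1]

lemma homog_lin (a b : ℂ) : (C b * Xv + C a * Yv).IsHomogeneous 1 := by
  apply MvPolynomial.IsHomogeneous.add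
  · simpa [Xv] using (isHomogeneous_C (Fin 2) b).mul (isHomogeneous_X ℂ (0 : Fin 2))
  · simpa [Yv] using (isHomogeneous_C (Fin 2) a).mul (isHomogeneous_X ℂ (1 : Fin 2))

lemma lin_indep_cubes {a b c d : ℂ} (hdet : b * d - a * c = 1) :
    LinearIndependent ℂ ![(C b * Xv + C a * Yv)^3,
      (C b * Xv + C a * Yv)^2 * (C c * Xv + C d * Yv)] := by
  set l : P2 := C b * Xv + C a * Yv with hl
  set m : P2 := C c * Xv + C d * Yv with hm
  rw [LinearIndependent.pair_iff]
  intro s t hst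
  have hst' : l^2 * (C s * l + C t * m) = 0 := by
    rw [← hst]; simp [smul_eq_C_mul]; ring
  have hab : a ≠ 0 ∨ b ≠ 0 := by
    by_contra h
    push_neg at h
    rw [h.1, h.2] at hdet; simp at hdet
  have hl0 : l ≠ 0 := lin_ne_zero hab
  have h2 : C s * l + C t * m = 0 := by
    rcases mul_eq_zero.1 hst' with h | h
    · exact absurd (pow_eq_zero_iff (n := 2) (by norm_num) |>.1 h) hl0
    · exact h
  have h2' : C (s*b + t*c) * Xv + C (s*a + t*d) * Yv = 0 := by
    rw [← h2, hl, hm]; simp only [map_add, map_mul]; ring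
  have e1 : s*b + t*c = 0 := by
    have := congrArg (cf 1 0) h2'
    rw [cf_lin10] at this; simpa [cf] using this
  have e2 : s*a + t*d = 0 := by
    have := congrArg (cf 0 1) h2'
    rw [cf_lin01] at this; simpa [cf] using this
  constructor
  · linear_combination d * e1 - c * e2 - s * hdet
  · linear_combination b * e2 - a * e1 - t * hdet

lemma degree_fin2 (d : Fin 2 →₀ ℕ) : d.degree = d 0 + d 1 := by
  rw [Finsupp.degree, ← Fin.sum_univ_two (fun i => d i)]
  exact Finset.sum_subset (Finset.subset_univ _) (by
    intro x _ hx
    simpa using Finsupp.notMem_support_iff.1 hx)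

lemma lin1_eq {r : P2} (hr : r.IsHomogeneous 1) :
    r = C (cf 1 0 r) * Xv + C (cf 0 1 r) * Yv := by
  ext d
  by_cases hd : d.degree = 1
  · have hdeq : d = Finsupp.single 0 (d 0) + Finsupp.single 1 (d 1) := by
      ext i; fin_cases i <;> simp
    rw [degree_fin2] at hd
    rcases (by omega : (d 0 = 1 ∧ d 1 = 0) ∨ (d 0 = 0 ∧ d 1 = 1)) with ⟨h0, h1⟩ | ⟨h0, h1⟩
    · rw [hdeq, h0, h1]
      show cf 1 0 r = cf 1 0 (C (cf 1 0 r) * Xv + C (cf 0 1 r) * Yv)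
      rw [cf_lin10]
    · rw [hdeq, h0, h1]
      show cf 0 1 r = cf 0 1 (C (cf 1 0 r) * Xv + C (cf 0 1 r) * Yv)
      rw [cf_lin01]
  · rw [hr.coeff_eq_zero hd, (homog_lin (cf 0 1 r) (cf 1 0 r)).coeff_eq_zero hd]

lemma factor_homog {p l : P2} (hp : p.IsHomogeneous 3) (hl : l.IsHomogeneous 1)
    (hdvd : l ^ 2 ∣ p) : ∃ c d : ℂ, p = l ^ 2 * (C c * Xv + C d * Yv) := by
  obtain ⟨q, hq⟩ := hdvd
  have hl2 : (l ^ 2).IsHomogeneous 2 := by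
    have := hl.mul hl; rwa [← sq] at this
  set N := q.totalDegree + 1 with hN
  have hsum : p = ∑ i ∈ Finset.range N, l ^ 2 * homogeneousComponent i q := by
    rw [← Finset.mul_sum, sum_homogeneousComponent, hq]
  have hp3 : homogeneousComponent 3 p = p := by
    rw [homogeneousComponent_of_mem hp]; simp
  have hterm : ∀ i, homogeneousComponent 3 (l ^ 2 * homogeneousComponent i q)
      = if i = 1 then l ^ 2 * homogeneousComponent 1 q else 0 := by
    intro i
    have hmem : l ^ 2 * homogeneousComponent i q ∈ homogeneousSubmodule (Fin 2) ℂ (2 + i) :=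
      hl2.mul (homogeneousComponent_isHomogeneous i q)
    rw [homogeneousComponent_of_mem hmem]
    by_cases hi : i = 1 <;> simp [hi] <;> omega
  have key : p = if 1 ∈ Finset.range N then l ^ 2 * homogeneousComponent 1 q else 0 := by
    conv_lhs => rw [← hp3, hsum]
    rw [map_sum]
    simp_rw [hterm]
    rw [Finset.sum_ite_eq' (Finset.range N) 1]
  by_cases h1 : 1 ∈ Finset.range N
  · rw [if_pos h1] at key
    refine ⟨cf 1 0 (homogeneousComponent 1 q), cf 0 1 (homogeneousComponent 1 q), ?_⟩
    rw [key, ← lin1_eq (homogeneousComponent_isHomogeneous 1 q)]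
  · refine ⟨0, 0, ?_⟩
    rw [if_neg h1] at key
    rw [key]; simp

lemma mapact_span (g : Matrix.SpecialLinearGroup (Fin 2) ℂ) :
    mapAct g L₁ = Submodule.span ℂ
      {(C (g.1 0 0) * Xv + C (g.1 0 1) * Yv) ^ 3,
       (C (g.1 0 0) * Xv + C (g.1 0 1) * Yv) ^ 2 * (C (g.1 1 0) * Xv + C (g.1 1 1) * Yv)} := by
  rw [mapAct, L₁, Submodule.map_span, Set.image_pair]
  have hX : subst g Xv = C (g.1 0 0) * Xv + C (g.1 0 1) * Yv := by
    simp [subst, Xv]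
  have hY : subst g Yv = C (g.1 1 0) * Xv + C (g.1 1 1) * Yv := by
    simp [subst, Yv]
  have h1 : (subst g).toLinearMap (Xv ^ 3) = (C (g.1 0 0) * Xv + C (g.1 0 1) * Yv) ^ 3 := by
    rw [AlgHom.toLinearMap_apply, map_pow, hX]
  have h2 : (subst g).toLinearMap (Xv ^ 2 * Yv)
      = (C (g.1 0 0) * Xv + C (g.1 0 1) * Yv) ^ 2 * (C (g.1 1 0) * Xv + C (g.1 1 1) * Yv) := by
    rw [AlgHom.toLinearMap_apply, map_mul, map_pow, hX, hY]
  rw [h1, h2]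

lemma span_finrank {a b c d : ℂ} (hdet : b * d - a * c = 1) :
    Module.finrank ℂ (Submodule.span ℂ {(C b * Xv + C a * Yv)^3,
      (C b * Xv + C a * Yv)^2 * (C c * Xv + C d * Yv)}) = 2 := by
  rw [show ({(C b * Xv + C a * Yv)^3, (C b * Xv + C a * Yv)^2 * (C c * Xv + C d * Yv)} : Set P2)
      = Set.range ![(C b * Xv + C a * Yv)^3, (C b * Xv + C a * Yv)^2 * (C c * Xv + C d * Yv)]
    from (Matrix.range_cons_cons_empty _ _ _).symm]
  rw [finrank_span_eq_card (lin_indep_cubes hdet)]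
  simp

lemma span_isLagrangian {a b c d : ℂ} (hdet : b * d - a * c = 1) :
    IsLagrangian (Submodule.span ℂ {(C b * Xv + C a * Yv)^3,
      (C b * Xv + C a * Yv)^2 * (C c * Xv + C d * Yv)}) := by
  set l : P2 := C b * Xv + C a * Yv with hl
  set m : P2 := C c * Xv + C d * Yv with hm
  refine ⟨?_, span_finrank hdet, ?_⟩
  · rw [Submodule.span_le]
    rintro x (rfl | rfl)
    · show (l^3).IsHomogeneous 3
      have h3 : l^3 = l * l * l := by ring
      rw [h3]
      exact ((homog_lin a b).mul (homog_lin a b)).mul (homog_lin a b)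
    · show (l^2 * m).IsHomogeneous 3
      have h3 : l^2 * m = l * l * m := by ring
      rw [h3]
      exact ((homog_lin a b).mul (homog_lin a b)).mul (homog_lin d c)
  · intro p hp q hq
    rw [Submodule.mem_span_pair] at hp hq
    obtain ⟨s, t, rfl⟩ := hp
    obtain ⟨s', t', rfl⟩ := hq
    rw [omega_comb, omega_cube]
    ring

end Aux

/-- The `SL(2,ℂ)`-orbit of `span{X³, X²Y}` is exactly the set of
Lagrangians `W` of `V` all of whose elements share a common double root, i.e. such that
there is `[a:b] ∈ ℂℙ¹` with `(bX-aY)²` dividing every element of `W`. -/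
theorem statement6 :
    slOrbit L₁ =
      {W : Submodule ℂ P2 | IsLagrangian W ∧
        ∃ a b : ℂ, (a ≠ 0 ∨ b ≠ 0) ∧ ∀ p ∈ W, lf a b ^ 2 ∣ p} := by
  ext W
  simp only [slOrbit, Set.mem_setOf_eq]
  constructor
  · rintro ⟨g, rfl⟩
    have hdet : g.1 0 0 * g.1 1 1 - g.1 0 1 * g.1 1 0 = 1 := by
      have := g.2; rwa [Matrix.det_fin_two] at this
    rw [mapact_span g]
    set l : P2 := C (g.1 0 0) * Xv + C (g.1 0 1) * Yv with hl
    set m : P2 := C (g.1 1 0) * Xv + C (g.1 1 1) * Yv with hm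
    refine ⟨span_isLagrangian hdet, -(g.1 0 1), g.1 0 0, ?_, ?_⟩
    · by_contra h
      push_neg at h
      obtain ⟨h1, h2⟩ := h
      rw [neg_eq_zero] at h1
      rw [h1, h2] at hdet
      simp at hdet
    · intro p hp
      have hlf : lf (-(g.1 0 1)) (g.1 0 0) = l := by
        rw [lf, hl, map_neg]; ring
      rw [hlf]
      rw [Submodule.mem_span_pair] at hp
      obtain ⟨s, t, rfl⟩ := hp
      exact ⟨C s * l + C t * m, by simp [smul_eq_C_mul]; ring⟩
  · rintro ⟨⟨hWV, hWrank, -⟩, a, b, hab, hdvd⟩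
    obtain ⟨c', d', hcd⟩ : ∃ c' d' : ℂ, b * d' + a * c' = 1 := by
      rcases hab with ha | hb
      · exact ⟨a⁻¹, 0, by field_simp; ring⟩
      · exact ⟨0, b⁻¹, by field_simp; ring⟩
    refine ⟨⟨!![b, -a; c', d'], by
      rw [Matrix.det_fin_two_of]
      linear_combination hcd⟩, ?_⟩
    set g : Matrix.SpecialLinearGroup (Fin 2) ℂ := ⟨!![b, -a; c', d'], by
      rw [Matrix.det_fin_two_of]
      linear_combination hcd⟩ with hg
    have hg00 : g.1 0 0 = b := by rw [hg]; norm_num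
    have hg01 : g.1 0 1 = -a := by rw [hg]; norm_num
    have hg10 : g.1 1 0 = c' := by rw [hg]; norm_num
    have hg11 : g.1 1 1 = d' := by rw [hg]; norm_num
    rw [mapact_span g, hg00, hg01, hg10, hg11]
    set l : P2 := C b * Xv + C (-a) * Yv with hl
    set m : P2 := C c' * Xv + C d' * Yv with hm
    have hdet : b * d' - (-a) * c' = 1 := by linear_combination hcd
    have hlf : lf a b = l := by rw [lf, hl, map_neg]; ring
    have hle : W ≤ Submodule.span ℂ {l ^ 3, l ^ 2 * m} := by
      intro p hp
      have hp3 : p.IsHomogeneous 3 := hWV hp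
      have hdl : l ^ 2 ∣ p := by rw [← hlf]; exact hdvd p hp
      obtain ⟨c, d, hpd⟩ := factor_homog hp3 (homog_lin (-a) b) hdl
      have hlin : (C c * Xv + C d * Yv : P2)
          = C (d' * c - c' * d) * l + C (a * c + b * d) * m := by
        have h1 : C (d' * c - c' * d) * l + C (a * c + b * d) * m
            = C (c * (b * d' + a * c')) * Xv + C (d * (b * d' + a * c')) * Yv := by
          simp only [hl, hm, map_add, map_mul, map_sub, map_neg]; ring
        rw [h1, hcd, mul_one, mul_one]
      rw [Submodule.mem_span_pair]
      refine ⟨d' * c - c' * d, a * c + b * d, ?_⟩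
      rw [hpd, hlin]
      simp only [smul_eq_C_mul]
      ring
    have hfd : FiniteDimensional ℂ (Submodule.span ℂ ({l ^ 3, l ^ 2 * m} : Set P2)) :=
      FiniteDimensional.span_of_finite ℂ (Set.toFinite _)
    exact Submodule.eq_of_le_of_finrank_le hle
      (by rw [span_finrank hdet, hWrank])
end
end

section
/- The map assigning to each Lagrangian W of V containing no perfect cube the 4-element set of double roots of its elements with a repeated root is a bijection from the set of all Lagrangians of V containing no perfect cube onto the set of all 4-element subsets of ℂℙ¹ that admit an ordering whose cross-ratio equals (1 − √3 i)/2 (i.e., onto the set of ideal vertex sets of regular ideal hyperbolic tetrahedra). -/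
noncomputable section

open MvPolynomial

/-- A repeated root: some `(bX-aY)²` divides `p`. -/
def HasRepeatedRoot (p : P2) : Prop :=
  ∃ a b : ℂ, (a ≠ 0 ∨ b ≠ 0) ∧ lf a b ^ 2 ∣ p

/-- The cross-ratio of four points of `ℂℙ¹` given in homogeneous coordinates
`zᵢ = [aᵢ : bᵢ]` (encoded as pairs `(aᵢ, bᵢ)`):
`[z₁,z₂,z₃,z₄] = ((a₃b₁ - a₁b₃)(a₄b₂ - a₂b₄)) / ((a₃b₂ - a₂b₃)(a₄b₁ - a₁b₄))`. -/
def crossRatio (z₁ z₂ z₃ z₄ : ℂ × ℂ) : ℂ :=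
  ((z₃.1 * z₁.2 - z₁.1 * z₃.2) * (z₄.1 * z₂.2 - z₂.1 * z₄.2)) /
    ((z₃.1 * z₂.2 - z₂.1 * z₃.2) * (z₄.1 * z₁.2 - z₁.1 * z₄.2))

/-- `√3` as a complex number. -/
def sqrt3 : ℂ := (Real.sqrt 3 : ℝ)

/-- `∛2` as a complex number. -/
def cbrt2 : ℂ := ((2 : ℝ) ^ ((1 : ℝ) / 3) : ℝ)

/-- `∛4` as a complex number. -/
def cbrt4 : ℂ := ((4 : ℝ) ^ ((1 : ℝ) / 3) : ℝ)

/-- `ℂℙ¹` as the projectivization of `ℂ²`. -/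
abbrev CP1 : Type := Projectivization ℂ (ℂ × ℂ)

/-- The point `[a:b] ∈ ℂℙ¹` is a double root of `p`, i.e. `(bX-aY)²` divides `p`. -/
def IsDoubleRootOf (P : CP1) (p : P2) : Prop :=
  ∃ (a b : ℂ) (h : (a, b) ≠ (0, 0)), P = Projectivization.mk ℂ (a, b) h ∧ lf a b ^ 2 ∣ p

/-- The set of double roots of the (nonzero) elements of `W` having a repeated root. -/
def doubleRootSet (W : Submodule ℂ P2) : Set CP1 :=
  {P : CP1 | ∃ q : P2, q ≠ 0 ∧ q ∈ W ∧ IsDoubleRootOf P q}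

/-- A 4-element subset of `ℂℙ¹` admitting an ordering with cross-ratio `(1-√3 i)/2`,
i.e. the ideal vertex set of a regular ideal hyperbolic tetrahedron. -/
def IsRegularIdealVertexSet (S : Set CP1) : Prop :=
  ∃ (z : Fin 4 → ℂ × ℂ) (h : ∀ i, z i ≠ (0, 0)),
    Function.Injective (fun i : Fin 4 => Projectivization.mk ℂ (z i) (h i)) ∧
    S = Set.range (fun i : Fin 4 => Projectivization.mk ℂ (z i) (h i)) ∧
    crossRatio (z 0) (z 1) (z 2) (z 3) = (1 - sqrt3 * Complex.I) / 2


namespace S11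

/-- canonical cubic with coefficients A,B,Cc,D -/
def toP (A B Cc D : ℂ) : P2 :=
  C A * Xv ^ 3 + C B * (Xv ^ 2 * Yv) + C Cc * (Xv * Yv ^ 2) + C D * Yv ^ 3

lemma mono_eq (i j : ℕ) :
    (Xv ^ i * Yv ^ j : P2) = monomial (Finsupp.single 0 i + Finsupp.single 1 j) 1 := by
  simp [Xv, Yv, X_pow_eq_monomial, monomial_mul]

lemma single_add_inj {i j i' j' : ℕ} :
    (Finsupp.single (0 : Fin 2) i + Finsupp.single 1 j
      = Finsupp.single (0 : Fin 2) i' + Finsupp.single 1 j') ↔ (i = i' ∧ j = j') := by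
  constructor
  · intro h
    have h0 := congrArg (fun f => f 0) h
    have h1 := congrArg (fun f => f 1) h
    simp [Finsupp.single_apply] at h0 h1
    exact ⟨h0, h1⟩
  · rintro ⟨rfl, rfl⟩; rfl

lemma toP_eq (A B Cc D : ℂ) :
    toP A B Cc D
      = C A * (Xv ^ 3 * Yv ^ 0) + C B * (Xv ^ 2 * Yv ^ 1)
        + C Cc * (Xv ^ 1 * Yv ^ 2) + C D * (Xv ^ 0 * Yv ^ 3) := by
  rw [toP]; ring

lemma cf_toP (i j : ℕ) (A B Cc D : ℂ) :
    cf i j (toP A B Cc D)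
      = (if 3 = i ∧ 0 = j then A else 0) + (if 2 = i ∧ 1 = j then B else 0)
        + (if 1 = i ∧ 2 = j then Cc else 0) + (if 0 = i ∧ 3 = j then D else 0) := by
  rw [toP_eq, mono_eq, mono_eq, mono_eq, mono_eq]
  simp only [cf, coeff_add, coeff_C_mul, coeff_monomial, single_add_inj]
  by_cases h3 : 3 = i ∧ 0 = j <;> by_cases h2 : 2 = i ∧ 1 = j <;>
    by_cases h1 : 1 = i ∧ 2 = j <;> by_cases h0 : 0 = i ∧ 3 = j <;>
    first
      | (exfalso; omega)
      | simp_all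

lemma cf30_toP (A B Cc D : ℂ) : cf 3 0 (toP A B Cc D) = A := by norm_num [cf_toP]
lemma cf21_toP (A B Cc D : ℂ) : cf 2 1 (toP A B Cc D) = B := by norm_num [cf_toP]
lemma cf12_toP (A B Cc D : ℂ) : cf 1 2 (toP A B Cc D) = Cc := by norm_num [cf_toP]
lemma cf03_toP (A B Cc D : ℂ) : cf 0 3 (toP A B Cc D) = D := by norm_num [cf_toP]

lemma toP_eq_zero_iff {A B Cc D : ℂ} :
    toP A B Cc D = 0 ↔ A = 0 ∧ B = 0 ∧ Cc = 0 ∧ D = 0 := by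
  constructor
  · intro h
    refine ⟨?_, ?_, ?_, ?_⟩
    · have := cf30_toP A B Cc D; rw [h] at this; simpa [cf] using this.symm
    · have := cf21_toP A B Cc D; rw [h] at this; simpa [cf] using this.symm
    · have := cf12_toP A B Cc D; rw [h] at this; simpa [cf] using this.symm
    · have := cf03_toP A B Cc D; rw [h] at this; simpa [cf] using this.symm
  · rintro ⟨rfl, rfl, rfl, rfl⟩
    simp only [toP, map_zero, zero_mul, add_zero]

lemma toP_inj {A B Cc D A' B' Cc' D' : ℂ} (h : toP A B Cc D = toP A' B' Cc' D') :
    A = A' ∧ B = B' ∧ Cc = Cc' ∧ D = D' := by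
  refine ⟨?_, ?_, ?_, ?_⟩
  · have := cf30_toP A B Cc D; rw [h, cf30_toP] at this; exact this.symm
  · have := cf21_toP A B Cc D; rw [h, cf21_toP] at this; exact this.symm
  · have := cf12_toP A B Cc D; rw [h, cf12_toP] at this; exact this.symm
  · have := cf03_toP A B Cc D; rw [h, cf03_toP] at this; exact this.symm

/-- every element of `Vcubic` is a `toP` of its coefficients -/
lemma coeff_eq_cf (p : P2) (i j : ℕ) :
    coeff (Finsupp.single 0 i + Finsupp.single 1 j) p = cf i j p := rfl

lemma rep_of_mem {p : P2} (hp : p ∈ Vcubic) :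
    p = toP (cf 3 0 p) (cf 2 1 p) (cf 1 2 p) (cf 0 3 p) := by
  have hh : p.IsHomogeneous 3 := (mem_homogeneousSubmodule _ _).mp hp
  apply MvPolynomial.ext
  intro m
  have hm : m = Finsupp.single 0 (m 0) + Finsupp.single 1 (m 1) := by
    ext a; fin_cases a <;> simp [Finsupp.single_apply]
  by_cases hs : m 0 + m 1 = 3
  · have hcase : m 0 = 3 ∧ m 1 = 0 ∨ m 0 = 2 ∧ m 1 = 1 ∨ m 0 = 1 ∧ m 1 = 2
        ∨ m 0 = 0 ∧ m 1 = 3 := by omega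
    rcases hcase with ⟨ha, hb⟩ | ⟨ha, hb⟩ | ⟨ha, hb⟩ | ⟨ha, hb⟩ <;>
      · rw [ha, hb] at hm
        rw [hm, coeff_eq_cf, coeff_eq_cf, cf_toP]
        norm_num
  · have hz : coeff m p = 0 := by
      by_contra hne
      have hw := hh hne
      rw [Finsupp.weight_apply, Finsupp.sum_fintype] at hw
      · simp [Fin.sum_univ_two] at hw; omega
      · simp
    rw [hz, hm, coeff_eq_cf, cf_toP]
    have h3' : ¬ (3 = m 0 ∧ 0 = m 1) := by omega
    have h2' : ¬ (2 = m 0 ∧ 1 = m 1) := by omega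
    have h1' : ¬ (1 = m 0 ∧ 2 = m 1) := by omega
    have h0' : ¬ (0 = m 0 ∧ 3 = m 1) := by omega
    rw [if_neg h3', if_neg h2', if_neg h1', if_neg h0']
    norm_num

lemma toP_mem_Vcubic (A B Cc D : ℂ) : toP A B Cc D ∈ Vcubic := by
  rw [Vcubic]
  have hx : (Xv : P2).IsHomogeneous 1 := isHomogeneous_X _ _
  have hy : (Yv : P2).IsHomogeneous 1 := isHomogeneous_X _ _
  refine Submodule.add_mem _ (Submodule.add_mem _ (Submodule.add_mem _ ?_ ?_) ?_) ?_ <;>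
    rw [mem_homogeneousSubmodule]
  · simpa using (isHomogeneous_C _ A).mul (hx.pow 3)
  · simpa using (isHomogeneous_C _ B).mul ((hx.pow 2).mul hy)
  · simpa using (isHomogeneous_C _ Cc).mul (hx.mul (hy.pow 2))
  · simpa using (isHomogeneous_C _ D).mul (hy.pow 3)

lemma omega_toP (v0 v1 v2 v3 w0 w1 w2 w3 : ℂ) :
    omegaForm (toP v0 v1 v2 v3) (toP w0 w1 w2 w3)
      = v0 * w3 - v3 * w0 - (1/3) * (v1 * w2 - v2 * w1) := by
  simp [omegaForm, cf30_toP, cf21_toP, cf12_toP, cf03_toP]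

end S11

namespace S11

lemma C_mul_dvd {u : ℂ} (hu : u ≠ 0) (q p : P2) : C u * q ∣ p ↔ q ∣ p := by
  constructor
  · rintro ⟨s, rfl⟩; exact ⟨C u * s, by ring⟩
  · rintro ⟨s, rfl⟩
    refine ⟨C u⁻¹ * s, ?_⟩
    rw [show C u * q * (C u⁻¹ * s) = (C u * C u⁻¹) * (q * s) from by ring,
      ← map_mul, mul_inv_cancel₀ hu, map_one, one_mul]

lemma lf_scale (t a b : ℂ) : lf (t * a) (t * b) = C t * lf a b := by
  simp only [lf, map_mul]; ring

lemma lf_sq_scale_dvd {t : ℂ} (ht : t ≠ 0) (a b : ℂ) (p : P2) :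
    lf (t * a) (t * b) ^ 2 ∣ p ↔ lf a b ^ 2 ∣ p := by
  rw [lf_scale, mul_pow, ← map_pow, C_mul_dvd (pow_ne_zero 2 ht)]

lemma lf_b_ne {b : ℂ} (hb : b ≠ 0) (a : ℂ) (p : P2) :
    lf a b ^ 2 ∣ p ↔ lf (a / b) 1 ^ 2 ∣ p := by
  have : lf a b = lf (b * (a / b)) (b * 1) := by
    rw [mul_one, mul_div_cancel₀ _ hb]
  rw [this, lf_sq_scale_dvd hb]

lemma lf_sq_a_zero (a : ℂ) : lf a 0 ^ 2 = C (a ^ 2) * Yv ^ 2 := by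
  simp only [lf, map_zero, zero_mul, zero_sub, map_pow]; ring

lemma lf_b_zero {a : ℂ} (ha : a ≠ 0) (p : P2) :
    lf a 0 ^ 2 ∣ p ↔ Yv ^ 2 ∣ p := by
  rw [lf_sq_a_zero, C_mul_dvd (pow_ne_zero 2 ha)]

/-- substitution X ↦ a + T, Y ↦ 1 -/
def Psi (a : ℂ) : P2 →ₐ[ℂ] Polynomial ℂ :=
  aeval ![Polynomial.C a + Polynomial.X, 1]

/-- substitution X ↦ 1, Y ↦ T -/
def Theta : P2 →ₐ[ℂ] Polynomial ℂ := aeval ![1, Polynomial.X]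

lemma Psi_lf (a : ℂ) : Psi a (lf a 1) = Polynomial.X := by
  simp [Psi, lf, Xv, Yv]

lemma Psi_toP (a A B c d : ℂ) :
    Psi a (toP A B c d)
      = Polynomial.C (A*a^3 + B*a^2 + c*a + d)
        + Polynomial.C (3*A*a^2 + 2*B*a + c) * Polynomial.X
        + Polynomial.C (3*A*a + B) * Polynomial.X ^ 2
        + Polynomial.C A * Polynomial.X ^ 3 := by
  simp only [Psi, toP, Xv, Yv, map_add, map_mul, map_pow, aeval_C, aeval_X,
    Matrix.cons_val_zero, Matrix.cons_val_one, Matrix.head_cons, map_ofNat,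
    Polynomial.algebraMap_eq, map_one]
  push_cast
  ring

lemma Theta_toP (A B c d : ℂ) :
    Theta (toP A B c d)
      = Polynomial.C A + Polynomial.C B * Polynomial.X
        + Polynomial.C c * Polynomial.X ^ 2 + Polynomial.C d * Polynomial.X ^ 3 := by
  simp only [Theta, toP, Xv, Yv, map_add, map_mul, map_pow, aeval_C, aeval_X,
    Matrix.cons_val_zero, Matrix.cons_val_one, Matrix.head_cons,
    Polynomial.algebraMap_eq, map_one]
  ring

lemma dr_fin_iff (A B c d a : ℂ) :
    lf a 1 ^ 2 ∣ toP A B c d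
      ↔ c = -(3*a^2*A) - 2*a*B ∧ d = 2*a^3*A + a^2*B := by
  constructor
  · rintro ⟨s, hs⟩
    have h2 : Polynomial.X ^ 2 ∣ Psi a (toP A B c d) := by
      rw [hs, map_mul, map_pow, Psi_lf]
      exact ⟨Psi a s, rfl⟩
    rw [Polynomial.X_pow_dvd_iff] at h2
    have e0 := h2 0 (by norm_num)
    have e1 := h2 1 (by norm_num)
    rw [Psi_toP] at e0 e1
    simp only [Polynomial.coeff_add, Polynomial.coeff_C, Polynomial.coeff_C_mul,
      Polynomial.coeff_X, Polynomial.coeff_X_pow] at e0 e1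
    norm_num at e0 e1
    constructor
    · linear_combination e1
    · linear_combination e0 - a * e1
  · rintro ⟨rfl, rfl⟩
    refine ⟨C A * Xv + C (B + 2*a*A) * Yv, ?_⟩
    simp only [toP, lf, map_add, map_mul, map_neg, map_sub, map_pow, map_ofNat, map_one]
    ring

lemma dr_inf_iff (A B c d : ℂ) :
    Yv ^ 2 ∣ toP A B c d ↔ A = 0 ∧ B = 0 := by
  constructor
  · rintro ⟨s, hs⟩
    have h2 : Polynomial.X ^ 2 ∣ Theta (toP A B c d) := by
      rw [hs, map_mul, map_pow, show Theta Yv = Polynomial.X from by simp [Theta, Yv]]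
      exact ⟨Theta s, rfl⟩
    rw [Polynomial.X_pow_dvd_iff] at h2
    have e0 := h2 0 (by norm_num)
    have e1 := h2 1 (by norm_num)
    rw [Theta_toP] at e0 e1
    simp only [Polynomial.coeff_add, Polynomial.coeff_C, Polynomial.coeff_C_mul,
      Polynomial.coeff_X, Polynomial.coeff_X_pow] at e0 e1
    norm_num at e0 e1
    exact ⟨e0, e1⟩
  · rintro ⟨rfl, rfl⟩
    refine ⟨C c * Xv + C d * Yv, ?_⟩
    simp only [toP, map_zero, zero_mul, zero_add, map_add, map_mul]
    ring

end S11

namespace S11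

lemma mem_span_four (A B Cc D : ℂ) :
    toP A B Cc D ∈ Submodule.span ℂ
      ({Xv ^ 3, Xv ^ 2 * Yv, Xv * Yv ^ 2, Yv ^ 3} : Set P2) := by
  rw [toP, ← smul_eq_C_mul, ← smul_eq_C_mul, ← smul_eq_C_mul, ← smul_eq_C_mul]
  refine Submodule.add_mem _ (Submodule.add_mem _ (Submodule.add_mem _ ?_ ?_) ?_) ?_ <;>
    refine Submodule.smul_mem _ _ (Submodule.subset_span ?_) <;> simp

lemma Vcubic_le_span : Vcubic ≤ Submodule.span ℂ
    ({Xv ^ 3, Xv ^ 2 * Yv, Xv * Yv ^ 2, Yv ^ 3} : Set P2) := by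
  intro p hp
  rw [rep_of_mem hp]
  exact mem_span_four _ _ _ _

instance : FiniteDimensional ℂ (Submodule.span ℂ
    ({Xv ^ 3, Xv ^ 2 * Yv, Xv * Yv ^ 2, Yv ^ 3} : Set P2)) :=
  FiniteDimensional.span_of_finite ℂ (Set.toFinite _)

lemma fd_of_le_Vcubic {W : Submodule ℂ P2} (h : W ≤ Vcubic) : FiniteDimensional ℂ W :=
  Submodule.finiteDimensional_of_le (le_trans h Vcubic_le_span)

lemma range_pair {α : Type*} (v : Fin 2 → α) : Set.range v = {v 0, v 1} := by
  ext x
  constructor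
  · rintro ⟨i, rfl⟩; fin_cases i <;> simp
  · rintro (rfl | rfl) <;> [exact ⟨0, rfl⟩; exact ⟨1, rfl⟩]

/-- from a rank-2 subspace of `Vcubic`, extract a basis pair -/
lemma two_elems {W : Submodule ℂ P2} (hle : W ≤ Vcubic) (h2 : Module.finrank ℂ W = 2) :
    ∃ p q : P2, p ∈ W ∧ q ∈ W
      ∧ (∀ x y : ℂ, x • p + y • q = 0 → x = 0 ∧ y = 0)
      ∧ W = Submodule.span ℂ {p, q} := by
  haveI := fd_of_le_Vcubic hle
  obtain b := Module.finBasisOfFinrankEq ℂ W h2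
  have hli : LinearIndependent ℂ (fun i => (b i : P2)) := by
    have := b.linearIndependent.map' W.subtype (Submodule.ker_subtype W)
    exact this
  refine ⟨((b 0 : W) : P2), ((b 1 : W) : P2), (b 0).2, (b 1).2, ?_, ?_⟩
  · intro x y hxy
    have := (Fintype.linearIndependent_iff.mp hli) ![x, y]
      (by
        rw [Fin.sum_univ_two]
        simp only [Matrix.cons_val_zero, Matrix.cons_val_one, Matrix.head_cons]
        exact hxy)
    exact ⟨by simpa using this 0, by simpa using this 1⟩
  · have hsp : Submodule.span ℂ (Set.range (fun i => (b i : P2))) = W := by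
      have hc : (fun i => ((b i : W) : P2)) = W.subtype ∘ b := rfl
      rw [hc, Set.range_comp, ← Submodule.map_span, b.span_eq, Submodule.map_subtype_top]
    rw [range_pair] at hsp
    exact hsp.symm

lemma span_pair_finrank {p q : P2}
    (h : ∀ x y : ℂ, x • p + y • q = 0 → x = 0 ∧ y = 0) :
    Module.finrank ℂ (Submodule.span ℂ ({p, q} : Set P2)) = 2 := by
  have hli : LinearIndependent ℂ ![p, q] := by
    rw [Fintype.linearIndependent_iff]
    intro g hg
    rw [Fin.sum_univ_two] at hg
    have := h (g 0) (g 1) (by simpa using hg)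
    intro i; fin_cases i <;> simp [this.1, this.2]
  have := finrank_span_eq_card hli
  rwa [range_pair, show (![p, q] : Fin 2 → P2) 0 = p from rfl,
    show (![p, q] : Fin 2 → P2) 1 = q from rfl] at this

end S11

namespace S11

abbrev SL2 := Matrix.SpecialLinearGroup (Fin 2) ℂ

lemma gdet (g : SL2) : g.1 0 0 * g.1 1 1 - g.1 0 1 * g.1 1 0 = 1 := by
  have := g.2
  rwa [Matrix.det_fin_two] at this

lemma subst_X (g : SL2) : subst g Xv = C (g.1 0 0) * Xv + C (g.1 0 1) * Yv := by
  simp [subst, Xv, Yv]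

lemma subst_Y (g : SL2) : subst g Yv = C (g.1 1 0) * Xv + C (g.1 1 1) * Yv := by
  simp [subst, Xv, Yv]

lemma subst_comp (g h : SL2) : (subst g).comp (subst h) = subst (h * g) := by
  apply MvPolynomial.algHom_ext
  intro i
  fin_cases i <;>
    simp [subst, Xv, Yv, Matrix.SpecialLinearGroup.coe_mul, Matrix.mul_apply,
      Fin.sum_univ_two] <;> ring

lemma subst_subst (g h : SL2) (p : P2) : subst g (subst h p) = subst (h * g) p := by
  rw [← subst_comp]; rfl

lemma subst_one (p : P2) : subst 1 p = p := by
  have : subst (1 : SL2) = AlgHom.id ℂ P2 := by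
    apply MvPolynomial.algHom_ext
    intro i
    fin_cases i <;> simp [subst, Xv, Yv]
  rw [this]; rfl

lemma subst_inv_subst (g : SL2) (p : P2) : subst g⁻¹ (subst g p) = p := by
  rw [subst_subst, mul_inv_cancel, subst_one]

lemma subst_subst_inv (g : SL2) (p : P2) : subst g (subst g⁻¹ p) = p := by
  rw [subst_subst, inv_mul_cancel, subst_one]

lemma subst_eq_zero_iff (g : SL2) {p : P2} : subst g p = 0 ↔ p = 0 := by
  constructor
  · intro h
    have := congrArg (subst g⁻¹) h
    rwa [subst_inv_subst, map_zero] at this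
  · rintro rfl; exact map_zero _

/-- the linear equivalence underlying `subst g` -/
def lequiv (g : SL2) : P2 ≃ₗ[ℂ] P2 :=
  LinearEquiv.ofLinear (subst g).toLinearMap (subst g⁻¹).toLinearMap
    (LinearMap.ext fun p => subst_subst_inv g p)
    (LinearMap.ext fun p => subst_inv_subst g p)

lemma mapAct_eq (g : SL2) (W : Submodule ℂ P2) :
    mapAct g W = W.map (lequiv g : P2 →ₗ[ℂ] P2) := rfl

lemma finrank_mapAct (g : SL2) (W : Submodule ℂ P2) :
    Module.finrank ℂ (mapAct g W) = Module.finrank ℂ W := by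
  rw [mapAct_eq]
  exact LinearEquiv.finrank_map_eq (lequiv g) W

lemma mapAct_mapAct (g h : SL2) (W : Submodule ℂ P2) :
    mapAct g (mapAct h W) = mapAct (h * g) W := by
  rw [mapAct, mapAct, mapAct, ← Submodule.map_comp, ← AlgHom.comp_toLinearMap, subst_comp]

lemma mapAct_one (W : Submodule ℂ P2) : mapAct 1 W = W := by
  rw [mapAct]
  have hid : (subst 1).toLinearMap = (LinearMap.id : P2 →ₗ[ℂ] P2) :=
    LinearMap.ext fun p => subst_one p
  rw [hid, Submodule.map_id]

lemma mapAct_inv_mapAct (g : SL2) (W : Submodule ℂ P2) :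
    mapAct g⁻¹ (mapAct g W) = W := by
  rw [mapAct_mapAct, mul_inv_cancel, mapAct_one]

lemma mem_mapAct {g : SL2} {W : Submodule ℂ P2} {p : P2} :
    p ∈ mapAct g W ↔ ∃ q ∈ W, subst g q = p := Submodule.mem_map

/-- induced action on homogeneous coordinate pairs -/
def act (g : SL2) (z : ℂ × ℂ) : ℂ × ℂ :=
  (z.1 * g.1 1 1 - z.2 * g.1 0 1, z.2 * g.1 0 0 - z.1 * g.1 1 0)

lemma subst_C (g : SL2) (x : ℂ) : subst g (C x) = C x := by
  simp [subst]

lemma subst_lf (g : SL2) (a b : ℂ) :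
    subst g (lf a b) = lf (act g (a, b)).1 (act g (a, b)).2 := by
  simp only [lf, act, map_sub, map_mul, subst_C, subst_X, subst_Y]
  ring

lemma ginv00 (g : SL2) : (g⁻¹).1 0 0 = g.1 1 1 := by
  rw [Matrix.SpecialLinearGroup.coe_inv, Matrix.adjugate_fin_two]; rfl
lemma ginv01 (g : SL2) : (g⁻¹).1 0 1 = -g.1 0 1 := by
  rw [Matrix.SpecialLinearGroup.coe_inv, Matrix.adjugate_fin_two]; rfl
lemma ginv10 (g : SL2) : (g⁻¹).1 1 0 = -g.1 1 0 := by
  rw [Matrix.SpecialLinearGroup.coe_inv, Matrix.adjugate_fin_two]; rfl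
lemma ginv11 (g : SL2) : (g⁻¹).1 1 1 = g.1 0 0 := by
  rw [Matrix.SpecialLinearGroup.coe_inv, Matrix.adjugate_fin_two]; rfl

lemma act_act_inv (g : SL2) (z : ℂ × ℂ) : act g⁻¹ (act g z) = z := by
  have hd := gdet g
  have h1 : (act g⁻¹ (act g z)).1 = z.1 := by
    simp only [act, ginv00, ginv01, ginv10, ginv11]
    linear_combination z.1 * hd
  have h2 : (act g⁻¹ (act g z)).2 = z.2 := by
    simp only [act, ginv00, ginv01, ginv10, ginv11]
    linear_combination z.2 * hd
  exact Prod.ext h1 h2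

lemma act_inv_act (g : SL2) (z : ℂ × ℂ) : act g (act g⁻¹ z) = z := by
  have := act_act_inv g⁻¹ z
  rwa [inv_inv] at this

lemma act_zero (g : SL2) : act g 0 = 0 := by simp [act]

lemma act_ne_zero (g : SL2) {z : ℂ × ℂ} (hz : z ≠ 0) : act g z ≠ 0 := by
  intro h
  apply hz
  have := congrArg (act g⁻¹) h
  rwa [act_act_inv, act_zero] at this

lemma act_smul (g : SL2) (t : ℂ) (z : ℂ × ℂ) : act g (t • z) = t • act g z := by
  apply Prod.ext <;> simp [act, Prod.smul_fst, Prod.smul_snd, smul_eq_mul] <;> ring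

/-- the bracket `u ∧ v` -/
def wedge (u v : ℂ × ℂ) : ℂ := u.1 * v.2 - v.1 * u.2

lemma wedge_act (g : SL2) (u v : ℂ × ℂ) : wedge (act g u) (act g v) = wedge u v := by
  have hd := gdet g
  simp only [wedge, act]
  linear_combination (u.1 * v.2 - v.1 * u.2) * hd

lemma crossRatio_eq_wedge (z₁ z₂ z₃ z₄ : ℂ × ℂ) :
    crossRatio z₁ z₂ z₃ z₄ = (wedge z₃ z₁ * wedge z₄ z₂) / (wedge z₃ z₂ * wedge z₄ z₁) :=
  rfl

lemma crossRatio_act (g : SL2) (z₁ z₂ z₃ z₄ : ℂ × ℂ) :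
    crossRatio (act g z₁) (act g z₂) (act g z₃) (act g z₄) = crossRatio z₁ z₂ z₃ z₄ := by
  rw [crossRatio_eq_wedge, crossRatio_eq_wedge, wedge_act, wedge_act, wedge_act, wedge_act]

lemma subst_toP (g : SL2) (v0 v1 v2 v3 : ℂ) :
    subst g (toP v0 v1 v2 v3)
      = toP (v0 * g.1 0 0 ^ 3 + v1 * g.1 0 0 ^ 2 * g.1 1 0 + v2 * g.1 0 0 * g.1 1 0 ^ 2
            + v3 * g.1 1 0 ^ 3)
          (3 * v0 * g.1 0 0 ^ 2 * g.1 0 1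
            + v1 * (g.1 0 0 ^ 2 * g.1 1 1 + 2 * g.1 0 0 * g.1 0 1 * g.1 1 0)
            + v2 * (2 * g.1 0 0 * g.1 1 0 * g.1 1 1 + g.1 0 1 * g.1 1 0 ^ 2)
            + 3 * v3 * g.1 1 0 ^ 2 * g.1 1 1)
          (3 * v0 * g.1 0 0 * g.1 0 1 ^ 2
            + v1 * (2 * g.1 0 0 * g.1 0 1 * g.1 1 1 + g.1 0 1 ^ 2 * g.1 1 0)
            + v2 * (g.1 0 0 * g.1 1 1 ^ 2 + 2 * g.1 0 1 * g.1 1 0 * g.1 1 1)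
            + 3 * v3 * g.1 1 0 * g.1 1 1 ^ 2)
          (v0 * g.1 0 1 ^ 3 + v1 * g.1 0 1 ^ 2 * g.1 1 1 + v2 * g.1 0 1 * g.1 1 1 ^ 2
            + v3 * g.1 1 1 ^ 3) := by
  simp only [toP, map_add, map_mul, map_pow, subst_C, subst_X, subst_Y, map_ofNat]
  ring

lemma omega_invariant (g : SL2) {p q : P2} (hp : p ∈ Vcubic) (hq : q ∈ Vcubic) :
    omegaForm (subst g p) (subst g q) = omegaForm p q := by
  have hd := gdet g
  rw [rep_of_mem hp, rep_of_mem hq, subst_toP, subst_toP, omega_toP, omega_toP]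
  set a := g.1 0 0
  set b := g.1 0 1
  set c := g.1 1 0
  set d := g.1 1 1
  set v0 := cf 3 0 p; set v1 := cf 2 1 p; set v2 := cf 1 2 p; set v3 := cf 0 3 p
  set w0 := cf 3 0 q; set w1 := cf 2 1 q; set w2 := cf 1 2 q; set w3 := cf 0 3 q
  linear_combination (((a*d - b*c)^2 + (a*d - b*c) + 1)
    * (v0*w3 - v3*w0 - (1/3)*(v1*w2 - v2*w1))) * hd

lemma subst_mem_Vcubic (g : SL2) {p : P2} (hp : p ∈ Vcubic) : subst g p ∈ Vcubic := by
  rw [rep_of_mem hp, subst_toP]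
  exact toP_mem_Vcubic _ _ _ _

end S11

namespace S11

lemma pair_ne_zero_iff {a b : ℂ} : ((a, b) : ℂ × ℂ) ≠ (0, 0) ↔ (a ≠ 0 ∨ b ≠ 0) := by
  rw [ne_eq, Prod.mk.injEq]
  tauto

lemma mk_eq_iff {z w : ℂ × ℂ} (hz : z ≠ 0) (hw : w ≠ 0) :
    Projectivization.mk ℂ z hz = Projectivization.mk ℂ w hw
      ↔ ∃ t : ℂ, t ≠ 0 ∧ t • w = z := by
  rw [Projectivization.mk_eq_mk_iff]
  constructor
  · rintro ⟨u, hu⟩; exact ⟨u, u.ne_zero, hu⟩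
  · rintro ⟨t, ht, htw⟩; exact ⟨Units.mk0 t ht, htw⟩

/-- transport of perfect cubes -/
lemma cube_mapAct {g : SL2} {W : Submodule ℂ P2}
    (h : ∃ p ∈ mapAct g W, IsPerfectCube p) : ∃ p ∈ W, IsPerfectCube p := by
  obtain ⟨p, hpmem, c, a, b, hc, hab, hform⟩ := h
  obtain ⟨q, hq, rfl⟩ := mem_mapAct.mp hpmem
  refine ⟨q, hq, c, (act g⁻¹ (a, b)).1, (act g⁻¹ (a, b)).2, hc, ?_, ?_⟩
  · rw [← pair_ne_zero_iff]
    exact act_ne_zero g⁻¹ (pair_ne_zero_iff.mpr hab)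
  · have := congrArg (subst g⁻¹) hform
    rwa [subst_inv_subst, map_mul, map_pow, subst_C, subst_lf] at this

lemma cubefree_mapAct {g : SL2} {W : Submodule ℂ P2}
    (h : ¬ ∃ p ∈ W, IsPerfectCube p) : ¬ ∃ p ∈ mapAct g W, IsPerfectCube p :=
  fun hc => h (cube_mapAct hc)

lemma isLagrangian_mapAct {g : SL2} {W : Submodule ℂ P2} (h : IsLagrangian W) :
    IsLagrangian (mapAct g W) := by
  obtain ⟨hle, hrk, hom⟩ := h
  refine ⟨?_, ?_, ?_⟩
  · intro p hp
    obtain ⟨q, hq, rfl⟩ := mem_mapAct.mp hp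
    exact subst_mem_Vcubic g (hle hq)
  · rw [finrank_mapAct]; exact hrk
  · intro p hp q hq
    obtain ⟨p', hp', rfl⟩ := mem_mapAct.mp hp
    obtain ⟨q', hq', rfl⟩ := mem_mapAct.mp hq
    rw [omega_invariant g (hle hp') (hle hq')]
    exact hom p' hp' q' hq'

lemma drs_act {g : SL2} {W : Submodule ℂ P2} {z : ℂ × ℂ} {hz : z ≠ 0}
    (h : Projectivization.mk ℂ z hz ∈ doubleRootSet W) :
    Projectivization.mk ℂ (act g z) (act_ne_zero g hz) ∈ doubleRootSet (mapAct g W) := by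
  obtain ⟨q, hq0, hqW, a, b, hab, hPmk, hdvd⟩ := h
  have hab' : ((a, b) : ℂ × ℂ) ≠ 0 := hab
  refine ⟨subst g q, by rwa [Ne, subst_eq_zero_iff], mem_mapAct.mpr ⟨q, hqW, rfl⟩,
    (act g (a, b)).1, (act g (a, b)).2, act_ne_zero g hab', ?_, ?_⟩
  · obtain ⟨t, ht, htw⟩ := (mk_eq_iff hz hab').mp hPmk
    refine (mk_eq_iff (act_ne_zero g hz) (act_ne_zero g hab')).mpr ⟨t, ht, ?_⟩
    rw [← act_smul, htw]
  · have : (subst g (lf a b)) ^ 2 ∣ subst g q := by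
      rw [← map_pow]
      exact map_dvd _ hdvd
    rwa [subst_lf] at this

lemma drs_mapAct (g : SL2) (W : Submodule ℂ P2) :
    doubleRootSet (mapAct g W)
      = {P : CP1 | ∃ (z : ℂ × ℂ) (hz : z ≠ 0),
          Projectivization.mk ℂ z hz ∈ doubleRootSet W
            ∧ P = Projectivization.mk ℂ (act g z) (act_ne_zero g hz)} := by
  ext P
  constructor
  · intro hP
    obtain ⟨q, hq0, hqW, a, b, hab, hPmk, hdvd⟩ := hP
    have hab' : ((a, b) : ℂ × ℂ) ≠ 0 := hab
    refine ⟨act g⁻¹ (a, b), act_ne_zero g⁻¹ hab', ?_, ?_⟩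
    · have h1 : Projectivization.mk ℂ (a, b) hab' ∈ doubleRootSet (mapAct g W) :=
        ⟨q, hq0, hqW, a, b, hab, rfl, hdvd⟩
      have h2 := drs_act (g := g⁻¹) h1
      rwa [mapAct_inv_mapAct] at h2
    · rw [hPmk]
      exact ((mk_eq_iff hab' (act_ne_zero g (act_ne_zero g⁻¹ hab'))).mpr
        ⟨1, one_ne_zero, by rw [one_smul, act_inv_act]⟩)
  · rintro ⟨z, hz, hmem, rfl⟩
    exact drs_act hmem

end S11

namespace S11

lemma toP_comb (x y a b c d a' b' c' d' : ℂ) :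
    x • toP a b c d + y • toP a' b' c' d'
      = toP (x*a + y*a') (x*b + y*b') (x*c + y*c') (x*d + y*d') := by
  simp only [smul_eq_C_mul, toP, map_add, map_mul]
  ring

lemma lf_cube (c a b : ℂ) :
    C c * lf a b ^ 3 = toP (c*b^3) (-(3*c*a*b^2)) (3*c*a^2*b) (-(c*a^3)) := by
  simp only [lf, toP, map_mul, map_neg, map_pow, map_ofNat]
  ring

/-- the standard Lagrangian: span of XY² and X³ + 2Y³ -/
def W0 : Submodule ℂ P2 := Submodule.span ℂ {toP 0 0 1 0, toP 1 0 0 2}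

lemma mem_W0_iff {p : P2} : p ∈ W0 ↔ ∃ x y : ℂ, p = toP y 0 x (2*y) := by
  rw [W0, Submodule.mem_span_pair]
  constructor
  · rintro ⟨x, y, rfl⟩
    exact ⟨x, y, by rw [toP_comb]; norm_num [mul_comm]⟩
  · rintro ⟨x, y, rfl⟩
    exact ⟨x, y, by rw [toP_comb]; norm_num [mul_comm]⟩

lemma W0_Lagrangian : IsLagrangian W0 := by
  refine ⟨?_, ?_, ?_⟩
  · rw [W0, Submodule.span_le]
    rintro p (rfl | rfl) <;> exact toP_mem_Vcubic _ _ _ _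
  · rw [W0]
    apply span_pair_finrank
    intro x y hxy
    rw [toP_comb] at hxy
    have h := toP_eq_zero_iff.mp hxy
    exact ⟨by linear_combination h.2.2.1, by linear_combination h.1⟩
  · intro p hp q hq
    obtain ⟨x, y, rfl⟩ := mem_W0_iff.mp hp
    obtain ⟨x', y', rfl⟩ := mem_W0_iff.mp hq
    rw [omega_toP]
    ring

lemma W0_cubefree : ¬ ∃ p ∈ W0, IsPerfectCube p := by
  rintro ⟨p, hp, c, a, b, hc, hab, rfl⟩
  obtain ⟨x, y, hxy⟩ := mem_W0_iff.mp hp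
  rw [lf_cube] at hxy
  obtain ⟨h0, h1, h2, h3⟩ := toP_inj hxy
  have hab2 : a * b ^ 2 = 0 := by
    have : c * (a * b ^ 2) = 0 := by linear_combination (-(1:ℂ)/3) * h1
    exact (mul_eq_zero.mp this).resolve_left hc
  rcases mul_eq_zero.mp hab2 with ha | hb
  · have hb : b ≠ 0 := hab.resolve_left (fun h => h ha)
    have hy : y = 0 := by
      have := h3; rw [ha] at this
      simpa using (by linear_combination -this / 2 : y = 0)
    rw [hy] at h0
    exact (mul_ne_zero hc (pow_ne_zero 3 hb)) h0
  · have hb : b = 0 := pow_eq_zero_iff (n := 2) (by norm_num) |>.mp hb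
    have ha : a ≠ 0 := by
      rcases hab with h | h
      · exact h
      · exact absurd hb h
    have hy : y = 0 := by
      rw [hb] at h0; simpa using h0.symm
    rw [hy] at h3
    have : c * a ^ 3 = 0 := by linear_combination -h3
    exact (mul_ne_zero hc (pow_ne_zero 3 ha)) this

/-- primitive cube root of unity -/
def zeta : ℂ := (-1 + sqrt3 * Complex.I) / 2

lemma sq3 : sqrt3 ^ 2 = 3 := by
  rw [sqrt3, ← Complex.ofReal_pow, Real.sq_sqrt (by norm_num : (3:ℝ) ≥ 0)]
  norm_num

lemma sqrt3_re : sqrt3.re = Real.sqrt 3 := by simp [sqrt3]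
lemma sqrt3_im : sqrt3.im = 0 := by simp [sqrt3]

lemma s3pos : 0 < Real.sqrt 3 := Real.sqrt_pos.mpr (by norm_num)

lemma zeta_re : zeta.re = -1/2 := by
  simp [zeta, Complex.div_re, Complex.add_re, Complex.mul_re, sqrt3_re, sqrt3_im,
    Complex.normSq]

lemma zeta_im : zeta.im = Real.sqrt 3 / 2 := by
  simp [zeta, Complex.div_im, Complex.add_im, Complex.mul_im, sqrt3_re, sqrt3_im,
    Complex.normSq]

lemma zeta_sq : zeta ^ 2 = (-1 - sqrt3 * Complex.I) / 2 := by
  rw [zeta]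
  linear_combination (-(1:ℂ)/4) * sq3 + (sqrt3^2/4) * Complex.I_sq

lemma zeta_cube : zeta ^ 3 = 1 := by
  rw [zeta]
  linear_combination ((3 - sqrt3*Complex.I)/8) * sq3
    + ((sqrt3^3*Complex.I - 3*sqrt3^2)/8) * Complex.I_sq

lemma zeta_ne_one : zeta ≠ 1 := by
  intro h
  have := congrArg Complex.re h
  rw [zeta_re] at this
  norm_num at this

lemma zeta_sq_ne_one : zeta ^ 2 ≠ 1 := by
  intro h
  rw [zeta_sq] at h
  have := congrArg Complex.re h
  simp [Complex.div_re, Complex.sub_re, Complex.mul_re, sqrt3_re, sqrt3_im] at this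
  norm_num at this

lemma zeta_ne_zero : zeta ≠ 0 := by
  intro h
  have := zeta_cube
  rw [h] at this
  norm_num at this

lemma zeta_ne_zeta_sq : zeta ≠ zeta ^ 2 := by
  intro h
  have h0 : zeta * (zeta - 1) = 0 := by linear_combination (-1 : ℂ) * h
  rcases mul_eq_zero.mp h0 with h1 | h1
  · exact zeta_ne_zero h1
  · exact zeta_ne_one (by linear_combination h1)

lemma cube_roots {r : ℂ} (h : r ^ 3 = 1) : r = 1 ∨ r = zeta ∨ r = zeta ^ 2 := by
  have hz3 := zeta_cube
  have hsum : 1 + zeta + zeta ^ 2 = 0 := by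
    have h1 : (zeta - 1) * (1 + zeta + zeta ^ 2) = zeta ^ 3 - 1 := by ring
    rw [zeta_cube, sub_self] at h1
    exact (mul_eq_zero.mp h1).resolve_left (sub_ne_zero.mpr zeta_ne_one)
  have hfac : (r - 1) * ((r - zeta) * (r - zeta ^ 2)) = 0 := by
    linear_combination h + (r - r^2) * hsum + (r - 1) * hz3
  rcases mul_eq_zero.mp hfac with h1 | h2
  · exact Or.inl (by linear_combination h1)
  rcases mul_eq_zero.mp h2 with h1 | h1
  · exact Or.inr (Or.inl (by linear_combination h1))
  · exact Or.inr (Or.inr (by linear_combination h1))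

lemma hne_inf : ((1 : ℂ), (0 : ℂ)) ≠ 0 := fun h => one_ne_zero (congrArg Prod.fst h)
lemma hne_pt (r : ℂ) : ((r, (1 : ℂ)) : ℂ × ℂ) ≠ 0 :=
  fun h => one_ne_zero (congrArg Prod.snd h)

/-- the point at infinity -/
def Pinf : CP1 := Projectivization.mk ℂ (1, 0) hne_inf
/-- a finite point -/
def Pt (r : ℂ) : CP1 := Projectivization.mk ℂ (r, 1) (hne_pt r)

lemma Pt_inj {r r' : ℂ} (h : Pt r = Pt r') : r = r' := by
  obtain ⟨t, ht, htw⟩ := (mk_eq_iff _ _).mp h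
  have h2 : t * 1 = 1 := congrArg Prod.snd htw
  have h1 : t * r' = r := congrArg Prod.fst htw
  rw [mul_one] at h2
  rw [h2, one_mul] at h1
  exact h1.symm

lemma Pinf_ne_Pt (r : ℂ) : Pinf ≠ Pt r := by
  intro h
  obtain ⟨t, ht, htw⟩ := (mk_eq_iff _ _).mp h
  have h2 : t * 1 = 0 := congrArg Prod.snd htw
  rw [mul_one] at h2
  exact ht h2

/-- the double root set of `W0` -/
lemma drs_W0 : doubleRootSet W0 = {Pinf, Pt 1, Pt zeta, Pt (zeta ^ 2)} := by
  ext P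
  constructor
  · rintro ⟨q, hq0, hqW, a, b, hab, hP, hdvd⟩
    obtain ⟨x, y, rfl⟩ := mem_W0_iff.mp hqW
    by_cases hb : b = 0
    · -- double root at infinity
      have ha : a ≠ 0 := by
        rcases pair_ne_zero_iff.mp hab with h | h
        · exact h
        · exact absurd hb h
      subst hb
      rw [lf_b_zero ha] at hdvd
      obtain ⟨hy, _⟩ := (dr_inf_iff _ _ _ _).mp hdvd
      left
      rw [hP, Pinf]
      exact (mk_eq_iff _ _).mpr ⟨a, ha, by simp [Prod.ext_iff]⟩
    · rw [lf_b_ne hb] at hdvd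
      obtain ⟨hx, hd⟩ := (dr_fin_iff _ _ _ _ _).mp hdvd
      have hy : y ≠ 0 := by
        rintro rfl
        apply hq0
        rw [show x = 0 from by linear_combination hx]
        exact toP_eq_zero_iff.mpr ⟨rfl, rfl, rfl, by norm_num⟩
      have hr3 : (a / b) ^ 3 = 1 := by
        have h2 : 2 * y * ((a / b) ^ 3 - 1) = 0 := by linear_combination -hd
        have h3 := (mul_eq_zero.mp h2).resolve_left (by
          intro h4
          exact hy ((mul_eq_zero.mp h4).resolve_left two_ne_zero))
        linear_combination h3
      have hPt : P = Pt (a / b) := by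
        rw [hP, Pt]
        exact (mk_eq_iff _ _).mpr ⟨b, hb, by
          have : b * (a / b) = a := mul_div_cancel₀ a hb
          simp [Prod.ext_iff, this]⟩
      rcases cube_roots hr3 with h | h | h <;> rw [hPt, h]
      · right; left; rfl
      · right; right; left; rfl
      · right; right; right; rfl
  · intro hP
    have hq_mem : ∀ r : ℂ, r ^ 3 = 1 → (Pt r) ∈ doubleRootSet W0 := by
      intro r hr3
      refine ⟨toP 1 0 (-(3*r^2)) 2, ?_, ?_, r, 1, hne_pt r, rfl, ?_⟩
      · intro h
        exact one_ne_zero (toP_eq_zero_iff.mp h).1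
      · exact mem_W0_iff.mpr ⟨-(3*r^2), 1, by norm_num⟩
      · rw [lf_b_ne one_ne_zero]
        refine (dr_fin_iff _ _ _ _ _).mpr ⟨by push_cast; ring, ?_⟩
        push_cast
        rw [div_one]
        linear_combination (-2 : ℂ) * hr3
    rcases hP with h | h | h | h <;> rw [h]
    · refine ⟨toP 0 0 1 0, ?_, Submodule.subset_span (by simp), 1, 0, hne_inf, rfl, ?_⟩
      · intro hc
        exact one_ne_zero (toP_eq_zero_iff.mp hc).2.2.1
      · rw [lf_b_zero one_ne_zero]
        exact (dr_inf_iff _ _ _ _).mpr ⟨rfl, rfl⟩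
    · exact hq_mem 1 (by norm_num)
    · exact hq_mem zeta zeta_cube
    · exact hq_mem (zeta ^ 2) (by rw [← pow_mul, show 2*3 = 3*2 from rfl, pow_mul,
        zeta_cube, one_pow])

end S11

namespace S11

lemma cr_std :
    crossRatio ((1:ℂ), (0:ℂ)) (1, 1) (zeta ^ 2, 1) (zeta, 1)
      = (1 - sqrt3 * Complex.I) / 2 := by
  have hden : ((zeta^2 * 1 - 1 * 1) * (zeta * 0 - 1 * 1)) ≠ 0 := by
    refine mul_ne_zero ?_ (by norm_num)
    intro h
    exact zeta_sq_ne_one (by linear_combination h)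
  show ((zeta^2 * 0 - 1 * 1) * (zeta * 1 - 1 * 1))
      / ((zeta^2 * 1 - 1 * 1) * (zeta * 0 - 1 * 1)) = (1 - sqrt3 * Complex.I) / 2
  rw [div_eq_iff hden, zeta]
  linear_combination ((sqrt3*Complex.I - 3)/8) * sq3
    + ((3*sqrt3^2 - sqrt3^3*Complex.I)/8) * Complex.I_sq

/-- nontrivial kernel of a singular 2x2 system -/
lemma ker2 {a b c d : ℂ} (h : a * d - b * c = 0) :
    ∃ x y : ℂ, ¬(x = 0 ∧ y = 0) ∧ a * x + b * y = 0 ∧ c * x + d * y = 0 := by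
  by_cases hab : a = 0 ∧ b = 0
  · by_cases hcd : c = 0 ∧ d = 0
    · exact ⟨1, 0, by simp, by simp [hab.1, hab.2], by simp [hcd.1, hcd.2]⟩
    · refine ⟨d, -c, ?_, by simp [hab.1, hab.2], by ring⟩
      intro ⟨h1, h2⟩
      exact hcd ⟨by linear_combination -h2, h1⟩
  · refine ⟨b, -a, ?_, by ring, by linear_combination -h⟩
    intro ⟨h1, h2⟩
    exact hab ⟨by linear_combination -h2, h1⟩

/-- the determinant vanishes on a nontrivial kernel -/
lemma det2 {a b c d x y : ℂ} (hxy : ¬(x = 0 ∧ y = 0))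
    (h1 : a * x + b * y = 0) (h2 : c * x + d * y = 0) : a * d - b * c = 0 := by
  by_cases hx : x = 0
  · have hy : y ≠ 0 := fun hy => hxy ⟨hx, hy⟩
    have hb : b = 0 := by
      have h := h1; rw [hx, mul_zero, zero_add] at h
      exact (mul_eq_zero.mp h).resolve_right hy
    have hd : d = 0 := by
      have h := h2; rw [hx, mul_zero, zero_add] at h
      exact (mul_eq_zero.mp h).resolve_right hy
    rw [hb, hd]; ring
  · have h3 : (a * d - b * c) * x = 0 := by linear_combination d * h1 - b * h2
    exact (mul_eq_zero.mp h3).resolve_right hx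

/-- any 2-dimensional subspace of cubics contains a nonzero element
with a repeated root -/
lemma exists_repeated {W : Submodule ℂ P2} (hle : W ≤ Vcubic)
    (h2 : Module.finrank ℂ W = 2) :
    ∃ r ∈ W, r ≠ 0 ∧ ∃ z : ℂ × ℂ, z ≠ 0 ∧ lf z.1 z.2 ^ 2 ∣ r := by
  obtain ⟨p, q, hpW, hqW, hind, hspan⟩ := two_elems hle h2
  set v0 := cf 3 0 p; set v1 := cf 2 1 p; set v2 := cf 1 2 p; set v3 := cf 0 3 p
  set w0 := cf 3 0 q; set w1 := cf 2 1 q; set w2 := cf 1 2 q; set w3 := cf 0 3 q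
  have hp : p = toP v0 v1 v2 v3 := rep_of_mem (hle hpW)
  have hq : q = toP w0 w1 w2 w3 := rep_of_mem (hle hqW)
  by_cases hd : v0 * w1 - v1 * w0 = 0
  · obtain ⟨x, y, hxy, e1, e2⟩ := ker2 (a := v0) (b := w0) (c := v1) (d := w1)
      (by linear_combination hd)
    refine ⟨x • p + y • q, Submodule.add_mem _ (Submodule.smul_mem _ _ hpW)
      (Submodule.smul_mem _ _ hqW), ?_, (1, 0), hne_inf, ?_⟩
    · intro h0
      obtain ⟨hx0, hy0⟩ := hind x y h0
      exact hxy ⟨hx0, hy0⟩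
    · rw [hp, hq, toP_comb]
      rw [show ((1,0) : ℂ × ℂ).1 = 1 from rfl, show ((1,0) : ℂ × ℂ).2 = 0 from rfl]
      rw [lf_b_zero one_ne_zero]
      exact (dr_inf_iff _ _ _ _).mpr ⟨by linear_combination e1, by linear_combination e2⟩
  · -- the resolvent quartic has a root
    set δ0 := v2*w3 - w2*v3 with hδ0
    set δ1 := 2*v1*w3 - 2*w1*v3 with hδ1
    set δ2 := 3*v0*w3 - v2*w1 - 3*w0*v3 + w2*v1 with hδ2
    set δ3 := 2*(v0*w2 - v2*w0) with hδ3
    set δ4 := v0*w1 - v1*w0 with hδ4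
    set Δ : Polynomial ℂ := Polynomial.C δ0 + Polynomial.C δ1 * Polynomial.X
      + Polynomial.C δ2 * Polynomial.X ^ 2 + Polynomial.C δ3 * Polynomial.X ^ 3
      + Polynomial.C δ4 * Polynomial.X ^ 4 with hΔ
    have hc4 : Δ.coeff 4 = δ4 := by
      rw [hΔ]
      simp [Polynomial.coeff_add, Polynomial.coeff_C_mul, Polynomial.coeff_X_pow,
        Polynomial.coeff_C]
    have hΔne : 0 < Δ.degree := by
      rw [← Polynomial.natDegree_pos_iff_degree_pos]
      have h4 : 4 ≤ Δ.natDegree := Polynomial.le_natDegree_of_ne_zero (by rw [hc4]; exact hd)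
      omega
    obtain ⟨a, ha⟩ := Complex.exists_root hΔne
    have heval : Δ.eval a = (v2 + 2*a*v1 + 3*a^2*v0) * (w3 - 2*a^3*w0 - a^2*w1)
        - (w2 + 2*a*w1 + 3*a^2*w0) * (v3 - 2*a^3*v0 - a^2*v1) := by
      rw [hΔ]
      simp only [Polynomial.eval_add, Polynomial.eval_mul, Polynomial.eval_pow,
        Polynomial.eval_C, Polynomial.eval_X, hδ0, hδ1, hδ2, hδ3, hδ4]
      ring
    have hdet : (v2 + 2*a*v1 + 3*a^2*v0) * (w3 - 2*a^3*w0 - a^2*w1)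
        - (w2 + 2*a*w1 + 3*a^2*w0) * (v3 - 2*a^3*v0 - a^2*v1) = 0 := by
      rw [← heval]; exact ha
    obtain ⟨x, y, hxy, e1, e2⟩ := ker2 hdet
    refine ⟨x • p + y • q, Submodule.add_mem _ (Submodule.smul_mem _ _ hpW)
      (Submodule.smul_mem _ _ hqW), ?_, (a, 1), hne_pt a, ?_⟩
    · intro h0
      obtain ⟨hx0, hy0⟩ := hind x y h0
      exact hxy ⟨hx0, hy0⟩
    · rw [hp, hq, toP_comb]
      rw [show ((a,1) : ℂ × ℂ).1 = a from rfl, show ((a,1) : ℂ × ℂ).2 = 1 from rfl]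
      rw [lf_b_ne one_ne_zero, div_one]
      refine (dr_fin_iff _ _ _ _ _).mpr ⟨by linear_combination e1, by linear_combination e2⟩

end S11

namespace S11

lemma toP_smul (x a b c d : ℂ) : x • toP a b c d = toP (x*a) (x*b) (x*c) (x*d) := by
  simp only [smul_eq_C_mul, toP, map_mul]
  ring

lemma toP_sub (a b c d a' b' c' d' : ℂ) :
    toP a b c d - toP a' b' c' d' = toP (a-a') (b-b') (c-c') (d-d') := by
  simp only [toP, map_sub]
  ring

lemma toP_congr {a b c d a' b' c' d' : ℂ} (h1 : a = a') (h2 : b = b') (h3 : c = c')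
    (h4 : d = d') : toP a b c d = toP a' b' c' d' := by
  rw [h1, h2, h3, h4]

lemma span_pair_smul {u v : P2} {c d : ℂ} (hc : c ≠ 0) (hd : d ≠ 0) :
    Submodule.span ℂ ({c • u, d • v} : Set P2) = Submodule.span ℂ ({u, v} : Set P2) := by
  apply le_antisymm
  · rw [Submodule.span_le]
    rintro q (rfl | rfl)
    · exact Submodule.smul_mem _ _ (Submodule.subset_span (by simp))
    · exact Submodule.smul_mem _ _ (Submodule.subset_span (by simp))
  · rw [Submodule.span_le]
    rintro q hq
    rcases hq with h | h <;> rw [h]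
    · have := Submodule.smul_mem (Submodule.span ℂ ({c • u, d • v} : Set P2)) c⁻¹
        (Submodule.subset_span (show c • u ∈ ({c • u, d • v} : Set P2) by simp))
      rwa [smul_smul, inv_mul_cancel₀ hc, one_smul] at this
    · have := Submodule.smul_mem (Submodule.span ℂ ({c • u, d • v} : Set P2)) d⁻¹
        (Submodule.subset_span (show d • v ∈ ({c • u, d • v} : Set P2) by simp))
      rwa [smul_smul, inv_mul_cancel₀ hd, one_smul] at this

lemma normal_form {W : Submodule ℂ P2} (hW : IsLagrangian W)
    (hcf : ¬ ∃ p ∈ W, IsPerfectCube p) : ∃ g : SL2, mapAct g W = W0 := by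
  obtain ⟨r, hrW, hr0, z, hz, hdvd⟩ := exists_repeated hW.1 hW.2.1
  have step1 : ∃ g1 : SL2, ∃ r1 ∈ mapAct g1 W, r1 ≠ 0 ∧ Yv ^ 2 ∣ r1 := by
    by_cases hz2 : z.2 = 0
    · refine ⟨1, r, by rw [mapAct_one]; exact hrW, hr0, ?_⟩
      have hz1 : z.1 ≠ 0 := by
        intro h1
        exact hz (Prod.ext h1 hz2)
      rw [hz2, lf_b_zero hz1] at hdvd
      exact hdvd
    · refine ⟨⟨!![z.1, -z.2⁻¹; z.2, 0], by rw [Matrix.det_fin_two_of]; field_simp; ring⟩,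
        subst ⟨!![z.1, -z.2⁻¹; z.2, 0], by rw [Matrix.det_fin_two_of]; field_simp; ring⟩ r,
        mem_mapAct.mpr ⟨r, hrW, rfl⟩, fun h0 => hr0 ((subst_eq_zero_iff _).mp h0), ?_⟩
      set g1 : SL2 := ⟨!![z.1, -z.2⁻¹; z.2, 0], by rw [Matrix.det_fin_two_of]; field_simp; ring⟩
        with hg1
      have hact : act g1 (z.1, z.2) = (1, 0) := by
        have e00 : g1.1 0 0 = z.1 := rfl
        have e01 : g1.1 0 1 = -z.2⁻¹ := rfl
        have e10 : g1.1 1 0 = z.2 := rfl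
        have e11 : g1.1 1 1 = 0 := rfl
        rw [act, e00, e01, e10, e11]
        have p1 : z.1 * 0 - z.2 * -z.2⁻¹ = 1 := by field_simp; ring
        have p2 : z.2 * z.1 - z.1 * z.2 = 0 := by ring
        rw [p1, p2]
      have hd2 : subst g1 (lf z.1 z.2) ^ 2 ∣ subst g1 r := by
        rw [← map_pow]
        exact map_dvd _ hdvd
      rw [subst_lf, hact] at hd2
      rwa [lf_b_zero one_ne_zero] at hd2
  obtain ⟨g1, r1, hr1W, hr10, hYdvd⟩ := step1
  have hW1L : IsLagrangian (mapAct g1 W) := isLagrangian_mapAct hW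
  have hW1cf : ¬ ∃ p ∈ mapAct g1 W, IsPerfectCube p := cubefree_mapAct hcf
  have hrep := rep_of_mem (hW1L.1 hr1W)
  set c := cf 1 2 r1 with hcdef
  set d := cf 0 3 r1 with hddef
  rw [hrep] at hYdvd
  obtain ⟨hA, hB⟩ := (dr_inf_iff _ _ _ _).mp hYdvd
  rw [hA, hB] at hrep
  have hc : c ≠ 0 := by
    intro h0
    have hd0 : d ≠ 0 := by
      intro h1
      apply hr10
      rw [hrep, h0, h1]
      exact toP_eq_zero_iff.mpr ⟨rfl, rfl, rfl, rfl⟩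
    apply hW1cf
    refine ⟨r1, hr1W, d, -1, 0, hd0, Or.inl (by norm_num), ?_⟩
    rw [hrep, h0, lf_cube]
    exact toP_congr (by ring) (by ring) (by ring) (by ring)
  set g2 : SL2 := ⟨!![1, -(d/c); 0, 1], by rw [Matrix.det_fin_two_of]; ring⟩ with hg2
  have h2r : subst g2 r1 = toP 0 0 c 0 := by
    have f00 : g2.1 0 0 = 1 := rfl
    have f01 : g2.1 0 1 = -(d/c) := rfl
    have f10 : g2.1 1 0 = 0 := rfl
    have f11 : g2.1 1 1 = 1 := rfl
    rw [hrep, subst_toP, f00, f01, f10, f11]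
    refine toP_congr (by ring) (by ring) (by ring) ?_
    have hcd : c * -(d/c) = -d := by rw [mul_neg, mul_div_cancel₀ d hc]
    linear_combination hcd
  set W2 := mapAct g2 (mapAct g1 W) with hW2def
  have hW2L : IsLagrangian W2 := isLagrangian_mapAct hW1L
  have hW2cf : ¬ ∃ p ∈ W2, IsPerfectCube p := cubefree_mapAct hW1cf
  have hxy2 : toP 0 0 1 0 ∈ W2 := by
    have h1 : toP 0 0 c 0 ∈ W2 := mem_mapAct.mpr ⟨r1, hr1W, h2r⟩
    have h2 := Submodule.smul_mem W2 c⁻¹ h1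
    rwa [toP_smul, mul_zero, inv_mul_cancel₀ hc] at h2
  haveI : FiniteDimensional ℂ W2 := fd_of_le_Vcubic hW2L.1
  have hxyne : toP 0 0 1 0 ≠ 0 := by
    intro h
    exact one_ne_zero (toP_eq_zero_iff.mp h).2.2.1
  have hex : ∃ p ∈ W2, p ∉ Submodule.span ℂ ({toP 0 0 1 0} : Set P2) := by
    by_contra hno
    push_neg at hno
    haveI : FiniteDimensional ℂ (Submodule.span ℂ ({toP 0 0 1 0} : Set P2)) :=
      FiniteDimensional.span_of_finite ℂ (Set.toFinite _)
    have hle2 : W2 ≤ Submodule.span ℂ ({toP 0 0 1 0} : Set P2) := fun q hq => hno q hq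
    have hmono := Submodule.finrank_mono hle2
    rw [finrank_span_singleton hxyne, hW2L.2.1] at hmono
    omega
  obtain ⟨p, hpW2, hpns⟩ := hex
  have hpV := rep_of_mem (hW2L.1 hpW2)
  set e := cf 3 0 p with hedef
  set f := cf 2 1 p with hfdef
  set c' := cf 1 2 p with hc'def
  set g' := cf 0 3 p with hg'def
  have hp'W : p - c' • toP 0 0 1 0 ∈ W2 :=
    Submodule.sub_mem _ hpW2 (Submodule.smul_mem _ _ hxy2)
  have hp'eq : p - c' • toP 0 0 1 0 = toP e f 0 g' := by
    rw [toP_smul]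
    nth_rewrite 1 [hpV]
    rw [toP_sub]
    exact toP_congr (by ring) (by ring) (by ring) (by ring)
  have hp'0 : p - c' • toP 0 0 1 0 ≠ 0 := by
    intro h0
    apply hpns
    rw [sub_eq_zero.mp h0]
    exact Submodule.smul_mem _ _ (Submodule.mem_span_singleton_self _)
  have hf : f = 0 := by
    have hω := hW2L.2.2 (toP 0 0 1 0) hxy2 _ hp'W
    rw [hp'eq, omega_toP] at hω
    linear_combination 3 * hω
  rw [hf] at hp'eq
  have hg'0 : g' ≠ 0 := by
    intro h0
    apply hW2cf
    have he' : e ≠ 0 := by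
      intro he0
      apply hp'0
      rw [hp'eq, he0, h0]
      exact toP_eq_zero_iff.mpr ⟨rfl, rfl, rfl, rfl⟩
    refine ⟨_, hp'W, e, 0, 1, he', Or.inr one_ne_zero, ?_⟩
    rw [hp'eq, h0, lf_cube]
    exact toP_congr (by ring) (by ring) (by ring) (by ring)
  have he0 : e ≠ 0 := by
    intro h0
    apply hW2cf
    refine ⟨_, hp'W, g', -1, 0, hg'0, Or.inl (by norm_num), ?_⟩
    rw [hp'eq, h0, lf_cube]
    exact toP_congr (by ring) (by ring) (by ring) (by ring)
  have hspan2 : W2 = Submodule.span ℂ ({toP 0 0 1 0, toP e 0 0 g'} : Set P2) := by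
    symm
    apply Submodule.eq_of_le_of_finrank_le
    · rw [Submodule.span_le]
      rintro q (rfl | rfl)
      · exact hxy2
      · rw [← hp'eq]; exact hp'W
    · rw [hW2L.2.1, span_pair_finrank ?_]
      intro x y hxy
      rw [toP_comb] at hxy
      obtain ⟨h0, h1, h2, h3⟩ := toP_eq_zero_iff.mp hxy
      have hy : y = 0 := by
        have hye : y * e = 0 := by linear_combination h0
        exact (mul_eq_zero.mp hye).resolve_right he0
      exact ⟨by linear_combination h2, hy⟩
  obtain ⟨t, ht6⟩ := IsAlgClosed.exists_pow_nat_eq (g'/(2*e)) (n := 6) (by norm_num)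
  have ht0 : t ≠ 0 := by
    intro h0
    rw [h0] at ht6
    have hz6 : (0:ℂ)^6 = 0 := by norm_num
    rw [hz6] at ht6
    exact (div_ne_zero hg'0 (mul_ne_zero two_ne_zero he0)) ht6.symm
  have hg'eq : g' = 2 * e * t^6 := by
    rw [eq_div_iff (mul_ne_zero two_ne_zero he0)] at ht6
    linear_combination -ht6
  set g3 : SL2 := ⟨!![t, 0; 0, t⁻¹], by rw [Matrix.det_fin_two_of]; field_simp; ring⟩ with hg3
  have k00 : g3.1 0 0 = t := rfl
  have k01 : g3.1 0 1 = 0 := rfl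
  have k10 : g3.1 1 0 = 0 := rfl
  have k11 : g3.1 1 1 = t⁻¹ := rfl
  have him1 : subst g3 (toP 0 0 1 0) = toP 0 0 t⁻¹ 0 := by
    rw [subst_toP, k00, k01, k10, k11]
    refine toP_congr (by ring) (by ring) ?_ (by ring)
    have htt : t * t⁻¹ ^ 2 = t⁻¹ := by
      rw [sq, ← mul_assoc, mul_inv_cancel₀ ht0, one_mul]
    linear_combination htt
  have him2 : subst g3 (toP e 0 0 g') = toP (e*t^3) 0 0 (g'*(t⁻¹)^3) := by
    rw [subst_toP, k00, k01, k10, k11]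
    exact toP_congr (by ring) (by ring) (by ring) (by ring)
  have him : mapAct g3 W2 = W0 := by
    rw [hspan2, mapAct, Submodule.map_span, Set.image_pair]
    rw [show ⇑(subst g3).toLinearMap = ⇑(subst g3) from rfl]
    rw [him1, him2, W0]
    rw [show toP 0 0 t⁻¹ 0 = t⁻¹ • toP 0 0 1 0 from by rw [toP_smul]; norm_num]
    rw [show toP (e*t^3) 0 0 (g'*(t⁻¹)^3) = (e*t^3) • toP 1 0 0 2 from by
      rw [toP_smul]
      refine toP_congr (by ring) (by ring) (by ring) ?_
      rw [hg'eq]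
      have htt : t ^ 6 * t⁻¹ ^ 3 = t ^ 3 := by
        rw [show (6:ℕ) = 3 + 3 from rfl, pow_add, mul_assoc, ← mul_pow,
          mul_inv_cancel₀ ht0, one_pow, mul_one]
      linear_combination 2 * e * htt]
    exact span_pair_smul (inv_ne_zero ht0) (mul_ne_zero he0 (pow_ne_zero 3 ht0))
  refine ⟨g1 * g2 * g3, ?_⟩
  rw [← mapAct_mapAct, ← mapAct_mapAct]
  exact him

end S11

namespace S11

lemma zeta_sum : 1 + zeta + zeta ^ 2 = 0 := by
  have h1 : (zeta - 1) * (1 + zeta + zeta ^ 2) = zeta ^ 3 - 1 := by ring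
  rw [zeta_cube, sub_self] at h1
  exact (mul_eq_zero.mp h1).resolve_left (sub_ne_zero.mpr zeta_ne_one)

lemma mk_eq_Pinf {a b : ℂ} (hab : ((a,b) : ℂ × ℂ) ≠ 0)
    (h : Projectivization.mk ℂ (a, b) hab = Pinf) : b = 0 ∧ a ≠ 0 := by
  obtain ⟨t, ht, htw⟩ := (mk_eq_iff hab hne_inf).mp h
  have h1 : t * 1 = a := congrArg Prod.fst htw
  have h2 : t * 0 = b := congrArg Prod.snd htw
  rw [mul_one] at h1
  rw [mul_zero] at h2
  exact ⟨h2.symm, h1 ▸ ht⟩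

lemma mk_eq_Pt {a b r : ℂ} (hab : ((a,b) : ℂ × ℂ) ≠ 0)
    (h : Projectivization.mk ℂ (a, b) hab = Pt r) : b ≠ 0 ∧ a = r * b := by
  obtain ⟨t, ht, htw⟩ := (mk_eq_iff hab (hne_pt r)).mp h
  have h1 : t * r = a := congrArg Prod.fst htw
  have h2 : t * 1 = b := congrArg Prod.snd htw
  rw [mul_one] at h2
  subst h2
  exact ⟨ht, by linear_combination -h1⟩

lemma dvd_root_at {q : P2} {a b r : ℂ} (hb : b ≠ 0) (har : a = r * b)
    (h : lf a b ^ 2 ∣ q) : lf r 1 ^ 2 ∣ q := by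
  rw [lf_b_ne hb, har, mul_div_assoc, div_self hb, mul_one] at h
  exact h

/-- rigidity: a cube-free Lagrangian with the standard double root set is `W0` -/
lemma rigidity {W' : Submodule ℂ P2} (hL : IsLagrangian W')
    (hcf : ¬ ∃ p ∈ W', IsPerfectCube p)
    (hdrs : doubleRootSet W' = {Pinf, Pt 1, Pt zeta, Pt (zeta ^ 2)}) : W' = W0 := by
  have hz3 := zeta_cube
  have hzsum := zeta_sum
  -- the element with a double root at infinity
  have hmem_inf : Pinf ∈ doubleRootSet W' := by rw [hdrs]; left; rfl
  obtain ⟨qi, hqi0, hqiW, a, b, hab, hPmk, hdvd⟩ := hmem_inf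
  obtain ⟨hb0, ha0⟩ := mk_eq_Pinf hab hPmk.symm
  rw [hb0, lf_b_zero ha0] at hdvd
  have hrepi := rep_of_mem (hL.1 hqiW)
  set c1 := cf 1 2 qi with hc1def
  set d1 := cf 0 3 qi with hd1def
  rw [hrepi] at hdvd
  obtain ⟨hA0, hB0⟩ := (dr_inf_iff _ _ _ _).mp hdvd
  rw [hA0, hB0] at hrepi
  have hc1 : c1 ≠ 0 := by
    intro h0
    have hd10 : d1 ≠ 0 := by
      intro h1
      exact hqi0 (by rw [hrepi, h0, h1]; exact toP_eq_zero_iff.mpr ⟨rfl, rfl, rfl, rfl⟩)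
    exact hcf ⟨qi, hqiW, d1, -1, 0, hd10, Or.inl (by norm_num), by
      rw [hrepi, h0, lf_cube]
      exact toP_congr (by ring) (by ring) (by ring) (by ring)⟩
  -- the element with a double root at 1
  have hmem_1 : Pt 1 ∈ doubleRootSet W' := by rw [hdrs]; right; left; rfl
  obtain ⟨q1, hq10, hq1W, a1, b1, hab1, hPmk1, hdvd1⟩ := hmem_1
  obtain ⟨hb1, ha1⟩ := mk_eq_Pt hab1 hPmk1.symm
  have hdvd1' := dvd_root_at hb1 ha1 hdvd1
  have hrep1 := rep_of_mem (hL.1 hq1W)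
  set A := cf 3 0 q1 with hAdef
  set B := cf 2 1 q1 with hBdef
  set Cq := cf 1 2 q1 with hCdef
  set D := cf 0 3 q1 with hDdef
  rw [hrep1] at hdvd1'
  obtain ⟨hC, hD⟩ := (dr_fin_iff _ _ _ _ _).mp hdvd1'
  norm_num at hC hD
  -- hC : Cq = -(3*A) - 2*B, hD : D = 2*A + B
  have hAB : ¬ (A = 0 ∧ B = 0) := by
    rintro ⟨hA, hB⟩
    apply hq10
    rw [hrep1, hA, hB]
    rw [show Cq = 0 from by rw [hC, hA, hB]; ring,
      show D = 0 from by rw [hD, hA, hB]; ring]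
    exact toP_eq_zero_iff.mpr ⟨rfl, rfl, rfl, rfl⟩
  -- the Lagrangian condition
  have hω : -(d1*A) + (1/3)*(c1*B) = 0 := by
    have h := hL.2.2 qi hqiW q1 hq1W
    rw [hrepi, hrep1, omega_toP] at h
    linear_combination h
  -- W' is spanned by qi and q1
  haveI : FiniteDimensional ℂ W' := fd_of_le_Vcubic hL.1
  have hspan' : W' = Submodule.span ℂ ({qi, q1} : Set P2) := by
    symm
    apply Submodule.eq_of_le_of_finrank_le
    · rw [Submodule.span_le]
      rintro q (rfl | rfl)
      · exact hqiW
      · exact hq1W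
    · rw [hL.2.1, span_pair_finrank ?_]
      intro x y hxy
      rw [hrepi, hrep1, toP_comb] at hxy
      obtain ⟨h0, h1, h2, h3⟩ := toP_eq_zero_iff.mp hxy
      have hy : y = 0 := by
        by_contra hy0
        exact hAB ⟨by
          have : y * A = 0 := by linear_combination h0
          exact (mul_eq_zero.mp this).resolve_left hy0, by
          have : y * B = 0 := by linear_combination h1
          exact (mul_eq_zero.mp this).resolve_left hy0⟩
      refine ⟨?_, hy⟩
      rw [hy] at h2
      have : x * c1 = 0 := by linear_combination h2
      exact (mul_eq_zero.mp this).resolve_right hc1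
  -- the elements with double roots at zeta and zeta²
  have hdet_at : ∀ r : ℂ, Pt r ∈ doubleRootSet W' →
      c1 * ((D) - 2*r^3*A - r^2*B) - (Cq + 3*r^2*A + 2*r*B) * d1 = 0 := by
    intro r hmem
    obtain ⟨q2, hq20, hq2W, a2, b2, hab2, hPmk2, hdvd2⟩ := hmem
    obtain ⟨hb2, ha2⟩ := mk_eq_Pt hab2 hPmk2.symm
    have hdvd2' := dvd_root_at hb2 ha2 hdvd2
    rw [hspan', Submodule.mem_span_pair] at hq2W
    obtain ⟨x, y, hq2eq⟩ := hq2W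
    rw [hrepi, hrep1, toP_comb] at hq2eq
    rw [← hq2eq] at hdvd2'
    obtain ⟨hE1, hE2⟩ := (dr_fin_iff _ _ _ _ _).mp hdvd2'
    have hxyne : ¬ (x = 0 ∧ y = 0) := by
      rintro ⟨rfl, rfl⟩
      apply hq20
      rw [← hq2eq]
      exact toP_eq_zero_iff.mpr ⟨by ring, by ring, by ring, by ring⟩
    have e1 : c1 * x + (Cq + 3*r^2*A + 2*r*B) * y = 0 := by linear_combination hE1
    have e2 : d1 * x + (D - 2*r^3*A - r^2*B) * y = 0 := by linear_combination hE2
    have hd := det2 hxyne e1 e2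
    linear_combination hd
  have hdz := hdet_at zeta (by rw [hdrs]; right; right; left; rfl)
  have hdz2 := hdet_at (zeta ^ 2) (by rw [hdrs]; right; right; right; rfl)
  -- simplify using hC, hD, hz3
  have hS1 : c1*B*(1 - zeta^2) - (3*A*(zeta^2 - 1) + 2*B*(zeta - 1))*d1 = 0 := by
    linear_combination hdz - c1*hD + 2*c1*A*hz3 + d1*hC
  have hS2 : c1*B*(1 - zeta) - (3*A*(zeta - 1) + 2*B*(zeta^2 - 1))*d1 = 0 := by
    linear_combination hdz2 - c1*hD + 2*c1*A*(zeta^3 + 1)*hz3 + d1*hC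
      + 3*A*d1*zeta*hz3 + c1*B*zeta*hz3
  have hdiff : (zeta - zeta^2) * (c1*B + 3*d1*A - 2*d1*B) = 0 := by
    linear_combination hS1 - hS2
  have hsum2 : (3:ℂ) * (c1*B + 3*d1*A + 2*d1*B) = 0 := by
    linear_combination hS1 + hS2 + (c1*B + 3*A*d1 + 2*B*d1)*hzsum
  have hKey1 : c1*B + 3*d1*A - 2*d1*B = 0 :=
    (mul_eq_zero.mp hdiff).resolve_left (sub_ne_zero.mpr zeta_ne_zeta_sq)
  have hKey2 : c1*B + 3*d1*A + 2*d1*B = 0 :=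
    (mul_eq_zero.mp hsum2).resolve_left (by norm_num : (3:ℂ) ≠ 0)
  have hKey3 : c1*B + 3*(d1*A) = 0 := by linear_combination (hKey1 + hKey2)/2
  have hω3 : c1*B = 3*(d1*A) := by linear_combination 3*hω
  have hd1A : d1*A = 0 := by linear_combination (hKey3 - hω3)/6
  have hB0' : B = 0 := by
    have hcB : c1*B = 0 := by linear_combination hω3 + 3*hd1A
    exact (mul_eq_zero.mp hcB).resolve_left hc1
  have hd10 : d1 = 0 := by
    by_cases h : d1 = 0
    · exact h
    · exact absurd ⟨(mul_eq_zero.mp hd1A).resolve_left h, hB0'⟩ hAB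
  have hA0' : A ≠ 0 := fun h => hAB ⟨h, hB0'⟩
  -- conclude
  have hq1f : q1 = toP A 0 (-(3*A)) (2*A) := by
    rw [hrep1]
    exact toP_congr rfl hB0' (by rw [hC, hB0']; ring) (by rw [hD, hB0']; ring)
  have hqif : qi = toP 0 0 c1 0 := by
    rw [hrepi]
    exact toP_congr rfl rfl rfl hd10
  rw [hspan', hqif, hq1f]
  rw [show toP 0 0 c1 0 = c1 • toP 0 0 1 0 from by
      rw [toP_smul]; exact toP_congr (by ring) (by ring) (by ring) (by ring),
    show toP A 0 (-(3*A)) (2*A) = A • toP 1 0 (-3) 2 from by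
      rw [toP_smul]; exact toP_congr (by ring) (by ring) (by ring) (by ring)]
  rw [span_pair_smul hc1 hA0']
  apply le_antisymm
  · rw [Submodule.span_le]
    rintro q (rfl | rfl)
    · exact mem_W0_iff.mpr ⟨1, 0, toP_congr (by ring) rfl rfl (by ring)⟩
    · exact mem_W0_iff.mpr ⟨-3, 1, toP_congr (by ring) rfl rfl (by norm_num)⟩
  · rw [W0, Submodule.span_le]
    rintro q (rfl | rfl)
    · exact Submodule.subset_span (by simp)
    · refine Submodule.mem_span_pair.mpr ⟨3, 1, ?_⟩
      rw [toP_comb]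
      exact toP_congr (by ring) (by ring) (by ring) (by ring)

end S11

namespace S11

lemma wedge_smul_left (t : ℂ) (u v : ℂ × ℂ) : wedge (t • u) v = t * wedge u v := by
  simp only [wedge, Prod.smul_fst, Prod.smul_snd, smul_eq_mul]
  ring

lemma wedge_smul_right (t : ℂ) (u v : ℂ × ℂ) : wedge u (t • v) = t * wedge u v := by
  simp only [wedge, Prod.smul_fst, Prod.smul_snd, smul_eq_mul]
  ring

lemma wedge_zero_mk {u v : ℂ × ℂ} (hu : u ≠ 0) (hv : v ≠ 0) (h : wedge u v = 0) :
    Projectivization.mk ℂ u hu = Projectivization.mk ℂ v hv := by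
  rw [wedge] at h
  by_cases hv1 : v.1 = 0
  · have hv2 : v.2 ≠ 0 := by
      intro hv2
      exact hv (Prod.ext hv1 hv2)
    have hu1 : u.1 = 0 := by
      have h1 : u.1 * v.2 = 0 := by rw [hv1] at h; linear_combination h
      exact (mul_eq_zero.mp h1).resolve_right hv2
    have hu2 : u.2 ≠ 0 := by
      intro hu2
      exact hu (Prod.ext hu1 hu2)
    refine (mk_eq_iff hu hv).mpr ⟨u.2 / v.2, div_ne_zero hu2 hv2, ?_⟩
    apply Prod.ext
    · show u.2 / v.2 * v.1 = u.1
      rw [hv1, hu1, mul_zero]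
    · show u.2 / v.2 * v.2 = u.2
      rw [div_mul_cancel₀ _ hv2]
  · have hu1 : u.1 ≠ 0 := by
      intro hu1
      have h1 : v.1 * u.2 = 0 := by rw [hu1] at h; linear_combination -h
      have hu2 : u.2 = 0 := (mul_eq_zero.mp h1).resolve_left hv1
      exact hu (Prod.ext hu1 hu2)
    refine (mk_eq_iff hu hv).mpr ⟨u.1 / v.1, div_ne_zero hu1 hv1, ?_⟩
    apply Prod.ext
    · show u.1 / v.1 * v.1 = u.1
      rw [div_mul_cancel₀ _ hv1]
    · show u.1 / v.1 * v.2 = u.2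
      rw [div_mul_eq_mul_div, eq_comm, eq_div_iff hv1]
      linear_combination -h

lemma mk_ne_wedge {u v : ℂ × ℂ} (hu : u ≠ 0) (hv : v ≠ 0)
    (h : Projectivization.mk ℂ u hu ≠ Projectivization.mk ℂ v hv) : wedge u v ≠ 0 :=
  fun h0 => h (wedge_zero_mk hu hv h0)

lemma cr_smul1 {s : ℂ} (hs : s ≠ 0) (z₁ z₂ z₃ z₄ : ℂ × ℂ) :
    crossRatio (s • z₁) z₂ z₃ z₄ = crossRatio z₁ z₂ z₃ z₄ := by
  rw [crossRatio_eq_wedge, crossRatio_eq_wedge, wedge_smul_right, wedge_smul_right,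
    show wedge z₃ z₂ * (s * wedge z₄ z₁) = s * (wedge z₃ z₂ * wedge z₄ z₁) from by ring,
    show s * wedge z₃ z₁ * wedge z₄ z₂ = s * (wedge z₃ z₁ * wedge z₄ z₂) from by ring,
    mul_div_mul_left _ _ hs]

lemma cr_smul2 {s : ℂ} (hs : s ≠ 0) (z₁ z₂ z₃ z₄ : ℂ × ℂ) :
    crossRatio z₁ (s • z₂) z₃ z₄ = crossRatio z₁ z₂ z₃ z₄ := by
  rw [crossRatio_eq_wedge, crossRatio_eq_wedge, wedge_smul_right, wedge_smul_right,
    show s * wedge z₃ z₂ * wedge z₄ z₁ = s * (wedge z₃ z₂ * wedge z₄ z₁) from by ring,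
    show wedge z₃ z₁ * (s * wedge z₄ z₂) = s * (wedge z₃ z₁ * wedge z₄ z₂) from by ring,
    mul_div_mul_left _ _ hs]

lemma cr_smul4 {s : ℂ} (hs : s ≠ 0) (z₁ z₂ z₃ z₄ : ℂ × ℂ) :
    crossRatio z₁ z₂ z₃ (s • z₄) = crossRatio z₁ z₂ z₃ z₄ := by
  rw [crossRatio_eq_wedge, crossRatio_eq_wedge, wedge_smul_left, wedge_smul_left,
    show wedge z₃ z₂ * (s * wedge z₄ z₁) = s * (wedge z₃ z₂ * wedge z₄ z₁) from by ring,
    show wedge z₃ z₁ * (s * wedge z₄ z₂) = s * (wedge z₃ z₁ * wedge z₄ z₂) from by ring,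
    mul_div_mul_left _ _ hs]

lemma cr_rigid {z0 z1 z3 w w' : ℂ × ℂ} (h01 : wedge z0 z1 ≠ 0)
    (h30 : wedge z3 z0 ≠ 0) (h31 : wedge z3 z1 ≠ 0)
    (hw1 : wedge w z1 ≠ 0) (hw1' : wedge w' z1 ≠ 0)
    (heq : crossRatio z0 z1 w z3 = crossRatio z0 z1 w' z3) : wedge w w' = 0 := by
  rw [crossRatio_eq_wedge, crossRatio_eq_wedge] at heq
  rw [div_eq_div_iff (mul_ne_zero hw1 h30) (mul_ne_zero hw1' h30)] at heq
  have hkey : (wedge z3 z1 * wedge z3 z0) * (wedge w w' * wedge z0 z1) = 0 := by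
    have hpl : wedge w z0 * wedge w' z1 - wedge w' z0 * wedge w z1
        = wedge w w' * wedge z0 z1 := by
      simp only [wedge]
      ring
    linear_combination heq - (wedge z3 z1 * wedge z3 z0) * hpl
  have h2 := (mul_eq_zero.mp hkey).resolve_left (mul_ne_zero h31 h30)
  exact (mul_eq_zero.mp h2).resolve_right h01

/-- congruence of the induced projective action -/
lemma mk_act_congr (g : SL2) {u v : ℂ × ℂ} (hu : u ≠ 0) (hv : v ≠ 0)
    (h : Projectivization.mk ℂ u hu = Projectivization.mk ℂ v hv) :
    Projectivization.mk ℂ (act g u) (act_ne_zero g hu)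
      = Projectivization.mk ℂ (act g v) (act_ne_zero g hv) := by
  obtain ⟨t, ht, htw⟩ := (mk_eq_iff hu hv).mp h
  exact (mk_eq_iff _ _).mpr ⟨t, ht, by rw [← act_smul, htw]⟩

/-- the standard homogeneous coordinates of the four points -/
noncomputable def stdz : Fin 4 → ℂ × ℂ := ![(1, 0), (1, 1), (zeta ^ 2, 1), (zeta, 1)]

lemma stdz_ne (i : Fin 4) : stdz i ≠ 0 := by
  fin_cases i
  · exact hne_inf
  · exact hne_pt 1
  · exact hne_pt (zeta ^ 2)
  · exact hne_pt zeta

lemma mk_stdz0 : Projectivization.mk ℂ (stdz 0) (stdz_ne 0) = Pinf := rfl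
lemma mk_stdz1 : Projectivization.mk ℂ (stdz 1) (stdz_ne 1) = Pt 1 := rfl
lemma mk_stdz2 : Projectivization.mk ℂ (stdz 2) (stdz_ne 2) = Pt (zeta ^ 2) := rfl
lemma mk_stdz3 : Projectivization.mk ℂ (stdz 3) (stdz_ne 3) = Pt zeta := rfl

lemma drs_mapAct_W0 (g : SL2) :
    doubleRootSet (mapAct g W0)
      = Set.range (fun i : Fin 4 =>
          Projectivization.mk ℂ (act g (stdz i)) (act_ne_zero g (stdz_ne i))) := by
  rw [drs_mapAct g W0, drs_W0]
  ext P
  constructor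
  · rintro ⟨u, hu, hmem, rfl⟩
    rcases hmem with h | h | h | h
    · exact ⟨0, mk_act_congr g (stdz_ne 0) hu (mk_stdz0.trans h.symm)⟩
    · exact ⟨1, mk_act_congr g (stdz_ne 1) hu (mk_stdz1.trans h.symm)⟩
    · exact ⟨3, mk_act_congr g (stdz_ne 3) hu (mk_stdz3.trans h.symm)⟩
    · exact ⟨2, mk_act_congr g (stdz_ne 2) hu (mk_stdz2.trans h.symm)⟩
  · rintro ⟨i, rfl⟩
    refine ⟨stdz i, stdz_ne i, ?_, rfl⟩
    have m0 : Projectivization.mk ℂ (stdz 0) (stdz_ne 0)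
        ∈ ({Pinf, Pt 1, Pt zeta, Pt (zeta ^ 2)} : Set CP1) := by
      rw [mk_stdz0]; left; rfl
    have m1 : Projectivization.mk ℂ (stdz 1) (stdz_ne 1)
        ∈ ({Pinf, Pt 1, Pt zeta, Pt (zeta ^ 2)} : Set CP1) := by
      rw [mk_stdz1]; right; left; rfl
    have m2 : Projectivization.mk ℂ (stdz 2) (stdz_ne 2)
        ∈ ({Pinf, Pt 1, Pt zeta, Pt (zeta ^ 2)} : Set CP1) := by
      rw [mk_stdz2]; right; right; right; rfl
    have m3 : Projectivization.mk ℂ (stdz 3) (stdz_ne 3)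
        ∈ ({Pinf, Pt 1, Pt zeta, Pt (zeta ^ 2)} : Set CP1) := by
      rw [mk_stdz3]; right; right; left; rfl
    fin_cases i
    · exact m0
    · exact m1
    · exact m2
    · exact m3

lemma mk_act_inj (g : SL2) {u v : ℂ × ℂ} (hu : u ≠ 0) (hv : v ≠ 0)
    (h : Projectivization.mk ℂ (act g u) (act_ne_zero g hu)
      = Projectivization.mk ℂ (act g v) (act_ne_zero g hv)) :
    Projectivization.mk ℂ u hu = Projectivization.mk ℂ v hv := by
  have h2 := mk_act_congr g⁻¹ (act_ne_zero g hu) (act_ne_zero g hv) h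
  obtain ⟨t, ht, htw⟩ := (mk_eq_iff _ _).mp h2
  rw [act_act_inv, act_act_inv] at htw
  exact (mk_eq_iff hu hv).mpr ⟨t, ht, htw⟩

lemma std_mk_inj : Function.Injective
    (fun i : Fin 4 => Projectivization.mk ℂ (stdz i) (stdz_ne i)) := by
  have h1ζ : (1 : ℂ) ≠ zeta := fun h => zeta_ne_one h.symm
  have h1ζ2 : (1 : ℂ) ≠ zeta ^ 2 := fun h => zeta_sq_ne_one h.symm
  have hζζ2 : zeta ≠ zeta ^ 2 := zeta_ne_zeta_sq
  intro i j hij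
  fin_cases i <;> fin_cases j <;>
    first
      | rfl
      | (exfalso
         simp only [mk_stdz0, mk_stdz1, mk_stdz2, mk_stdz3] at hij
         first
           | exact Pinf_ne_Pt _ hij
           | exact Pinf_ne_Pt _ hij.symm
           | exact h1ζ (Pt_inj hij)
           | exact h1ζ (Pt_inj hij.symm)
           | exact h1ζ2 (Pt_inj hij)
           | exact h1ζ2 (Pt_inj hij.symm)
           | exact hζζ2 (Pt_inj hij)
           | exact hζζ2 (Pt_inj hij.symm))

end S11

namespace S11

lemma hζ1 : zeta - 1 ≠ 0 := sub_ne_zero.mpr zeta_ne_one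

/-- main construction for surjectivity -/
lemma surj_construction {z : Fin 4 → ℂ × ℂ} (h : ∀ i, z i ≠ (0, 0))
    (hinj : Function.Injective (fun i : Fin 4 => Projectivization.mk ℂ (z i) (h i)))
    (hcr : crossRatio (z 0) (z 1) (z 2) (z 3) = (1 - sqrt3 * Complex.I) / 2) :
    ∃ g : SL2, ∀ i, Projectivization.mk ℂ (act g (stdz i)) (act_ne_zero g (stdz_ne i))
      = Projectivization.mk ℂ (z i) (h i) := by
  have hmkne : ∀ i j : Fin 4, i ≠ j → wedge (z i) (z j) ≠ 0 := by
    intro i j hij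
    exact mk_ne_wedge (h i) (h j) (fun hmk => hij (hinj hmk))
  have hw01 : wedge (z 0) (z 1) ≠ 0 := hmkne 0 1 (by decide)
  have hw31 : wedge (z 3) (z 1) ≠ 0 := hmkne 3 1 (by decide)
  have hw03 : wedge (z 0) (z 3) ≠ 0 := hmkne 0 3 (by decide)
  have hw30 : wedge (z 3) (z 0) ≠ 0 := hmkne 3 0 (by decide)
  have hw21 : wedge (z 2) (z 1) ≠ 0 := hmkne 2 1 (by decide)
  set m00 := wedge (z 3) (z 1) * (z 0).1 with hm00
  set m10 := wedge (z 3) (z 1) * (z 0).2 with hm10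
  set m01 := (zeta - 1) * wedge (z 0) (z 3) * (z 1).1 - wedge (z 3) (z 1) * (z 0).1
    with hm01
  set m11 := (zeta - 1) * wedge (z 0) (z 3) * (z 1).2 - wedge (z 3) (z 1) * (z 0).2
    with hm11
  set detF := wedge (z 3) (z 1) * ((zeta - 1) * wedge (z 0) (z 3)) * wedge (z 0) (z 1)
    with hdetF
  have hdetF0 : detF ≠ 0 :=
    mul_ne_zero (mul_ne_zero hw31 (mul_ne_zero hζ1 hw03)) hw01
  obtain ⟨τ, hτ⟩ := IsAlgClosed.exists_pow_nat_eq detF⁻¹ (n := 2) (by norm_num)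
  have hτ0 : τ ≠ 0 := by
    intro h0
    rw [h0] at hτ
    exact inv_ne_zero hdetF0 (by linear_combination -hτ)
  have hdetm : m00 * m11 - m01 * m10 = detF := by
    rw [hm00, hm01, hm10, hm11, hdetF]
    simp only [wedge]
    ring
  set g : SL2 := ⟨!![τ*m11, -(τ*m01); -(τ*m10), τ*m00], by
    rw [Matrix.det_fin_two_of]
    have : τ*m11 * (τ*m00) - -(τ*m01) * -(τ*m10) = τ^2 * (m00*m11 - m01*m10) := by ring
    rw [this, hdetm, hτ, inv_mul_cancel₀ hdetF0]⟩ with hg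
  have hact : ∀ a b : ℂ, act g (a, b) = (a*(τ*m00) + b*(τ*m01), a*(τ*m10) + b*(τ*m11)) := by
    intro a b
    have k00 : g.1 0 0 = τ*m11 := rfl
    have k01 : g.1 0 1 = -(τ*m01) := rfl
    have k10 : g.1 1 0 = -(τ*m10) := rfl
    have k11 : g.1 1 1 = τ*m00 := rfl
    rw [act, k00, k01, k10, k11]
    apply Prod.ext
    · show a * (τ*m00) - b * -(τ*m01) = _
      ring
    · show b * (τ*m11) - a * -(τ*m10) = _
      ring
  have hcramer1 : wedge (z 3) (z 1) * (z 0).1 + wedge (z 0) (z 3) * (z 1).1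
      = wedge (z 0) (z 1) * (z 3).1 := by
    simp only [wedge]; ring
  have hcramer2 : wedge (z 3) (z 1) * (z 0).2 + wedge (z 0) (z 3) * (z 1).2
      = wedge (z 0) (z 1) * (z 3).2 := by
    simp only [wedge]; ring
  have e0 : act g (stdz 0) = (τ * wedge (z 3) (z 1)) • z 0 := by
    rw [show stdz 0 = ((1:ℂ), (0:ℂ)) from rfl, hact]
    apply Prod.ext
    · show 1*(τ*m00) + 0*(τ*m01) = τ * wedge (z 3) (z 1) * (z 0).1
      rw [hm00]; ring
    · show 1*(τ*m10) + 0*(τ*m11) = τ * wedge (z 3) (z 1) * (z 0).2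
      rw [hm10]; ring
  have e1 : act g (stdz 1) = (τ * ((zeta - 1) * wedge (z 0) (z 3))) • z 1 := by
    rw [show stdz 1 = ((1:ℂ), (1:ℂ)) from rfl, hact]
    apply Prod.ext
    · show 1*(τ*m00) + 1*(τ*m01) = τ * ((zeta - 1) * wedge (z 0) (z 3)) * (z 1).1
      rw [hm00, hm01]; ring
    · show 1*(τ*m10) + 1*(τ*m11) = τ * ((zeta - 1) * wedge (z 0) (z 3)) * (z 1).2
      rw [hm10, hm11]; ring
  have e3 : act g (stdz 3) = (τ * ((zeta - 1) * wedge (z 0) (z 1))) • z 3 := by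
    rw [show stdz 3 = (zeta, (1:ℂ)) from rfl, hact]
    apply Prod.ext
    · show zeta*(τ*m00) + 1*(τ*m01) = τ * ((zeta - 1) * wedge (z 0) (z 1)) * (z 3).1
      rw [hm00, hm01]
      linear_combination τ * (zeta - 1) * hcramer1
    · show zeta*(τ*m10) + 1*(τ*m11) = τ * ((zeta - 1) * wedge (z 0) (z 1)) * (z 3).2
      rw [hm10, hm11]
      linear_combination τ * (zeta - 1) * hcramer2
  have hs0 : τ * wedge (z 3) (z 1) ≠ 0 := mul_ne_zero hτ0 hw31
  have hs1 : τ * ((zeta - 1) * wedge (z 0) (z 3)) ≠ 0 :=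
    mul_ne_zero hτ0 (mul_ne_zero hζ1 hw03)
  have hs3 : τ * ((zeta - 1) * wedge (z 0) (z 1)) ≠ 0 :=
    mul_ne_zero hτ0 (mul_ne_zero hζ1 hw01)
  -- cross-ratio forces the image of the third point
  have hcrg : crossRatio (act g (stdz 0)) (act g (stdz 1)) (act g (stdz 2))
      (act g (stdz 3)) = (1 - sqrt3 * Complex.I) / 2 := by
    rw [show stdz 0 = ((1:ℂ), (0:ℂ)) from rfl, show stdz 1 = ((1:ℂ), (1:ℂ)) from rfl,
      show stdz 2 = (zeta^2, (1:ℂ)) from rfl, show stdz 3 = (zeta, (1:ℂ)) from rfl]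
    rw [show act g ((1:ℂ), (0:ℂ)) = act g ((1:ℂ), (0:ℂ)) from rfl]
    rw [crossRatio_act]
    exact cr_std
  rw [e0, e1, e3, cr_smul1 hs0, cr_smul2 hs1, cr_smul4 hs3] at hcrg
  have hw2g1 : wedge (act g (stdz 2)) (z 1) ≠ 0 := by
    have h21 : wedge (act g (stdz 2)) (act g (stdz 1)) ≠ 0 := by
      rw [wedge_act]
      have hval : wedge (stdz 2) (stdz 1) = zeta ^ 2 - 1 := by
        show zeta ^ 2 * 1 - 1 * 1 = zeta ^ 2 - 1
        ring
      rw [hval]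
      exact sub_ne_zero.mpr zeta_sq_ne_one
    rw [e1, wedge_smul_right] at h21
    intro hcon
    exact h21 (by rw [hcon, mul_zero])
  have hwedge2 : wedge (act g (stdz 2)) (z 2) = 0 :=
    cr_rigid hw01 hw30 hw31 hw2g1 hw21 (hcrg.trans hcr.symm)
  refine ⟨g, ?_⟩
  have hall0 : Projectivization.mk ℂ (act g (stdz 0)) (act_ne_zero g (stdz_ne 0))
      = Projectivization.mk ℂ (z 0) (h 0) :=
    (mk_eq_iff _ _).mpr ⟨τ * wedge (z 3) (z 1), hs0, e0.symm⟩
  have hall1 : Projectivization.mk ℂ (act g (stdz 1)) (act_ne_zero g (stdz_ne 1))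
      = Projectivization.mk ℂ (z 1) (h 1) :=
    (mk_eq_iff _ _).mpr ⟨_, hs1, e1.symm⟩
  have hall3 : Projectivization.mk ℂ (act g (stdz 3)) (act_ne_zero g (stdz_ne 3))
      = Projectivization.mk ℂ (z 3) (h 3) :=
    (mk_eq_iff _ _).mpr ⟨_, hs3, e3.symm⟩
  have hall2 : Projectivization.mk ℂ (act g (stdz 2)) (act_ne_zero g (stdz_ne 2))
      = Projectivization.mk ℂ (z 2) (h 2) :=
    wedge_zero_mk _ _ hwedge2
  intro i
  fin_cases i
  · exact hall0
  · exact hall1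
  · exact hall2
  · exact hall3

end S11


/-- The map assigning to each Lagrangian of `V` containing no perfect
cube the 4-element set of double roots of its elements with a repeated root is a bijection
from the set of such Lagrangians onto the set of ideal vertex sets of regular ideal
hyperbolic tetrahedra. -/
theorem statement11 :
    Set.BijOn doubleRootSet
      {W : Submodule ℂ P2 | IsLagrangian W ∧ ¬ ∃ p ∈ W, IsPerfectCube p}
      {S : Set CP1 | IsRegularIdealVertexSet S} := by
  classical
  refine ⟨?_, ?_, ?_⟩
  · -- maps to
    intro W hW
    obtain ⟨hL, hcf⟩ := hW
    obtain ⟨g, hg⟩ := S11.normal_form hL hcf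
    have hWeq : W = mapAct g⁻¹ S11.W0 := by rw [← hg, S11.mapAct_inv_mapAct]
    show IsRegularIdealVertexSet (doubleRootSet W)
    refine ⟨fun i => S11.act g⁻¹ (S11.stdz i),
      fun i => S11.act_ne_zero g⁻¹ (S11.stdz_ne i), ?_, ?_, ?_⟩
    · intro i j hij
      exact S11.std_mk_inj (S11.mk_act_inj g⁻¹ (S11.stdz_ne i) (S11.stdz_ne j) hij)
    · rw [hWeq]
      exact S11.drs_mapAct_W0 g⁻¹
    · exact (S11.crossRatio_act g⁻¹ _ _ _ _).trans S11.cr_std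
  · -- injective
    intro W hW W' hW' heq
    obtain ⟨g, hg⟩ := S11.normal_form hW.1 hW.2
    have h1 : doubleRootSet (mapAct g W')
        = {S11.Pinf, S11.Pt 1, S11.Pt S11.zeta, S11.Pt (S11.zeta ^ 2)} := by
      rw [S11.drs_mapAct g W', ← heq, ← S11.drs_mapAct g W, hg, S11.drs_W0]
    have h2 : mapAct g W' = S11.W0 :=
      S11.rigidity (S11.isLagrangian_mapAct hW'.1) (S11.cubefree_mapAct hW'.2) h1
    have h3 := congrArg (mapAct g⁻¹) (hg.trans h2.symm)
    rwa [S11.mapAct_inv_mapAct, S11.mapAct_inv_mapAct] at h3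
  · -- surjective
    intro S hS
    obtain ⟨z, h, hinj, hSeq, hcr⟩ := hS
    obtain ⟨g, hall⟩ := S11.surj_construction h hinj hcr
    refine ⟨mapAct g S11.W0,
      ⟨S11.isLagrangian_mapAct S11.W0_Lagrangian, S11.cubefree_mapAct S11.W0_cubefree⟩, ?_⟩
    show doubleRootSet (mapAct g S11.W0) = S
    rw [S11.drs_mapAct_W0 g, hSeq]
    exact congrArg Set.range (funext hall)
end
end
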